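/- arXiv:1104.3774 — 4 statements merged into one kernel-verified Lean document; each statement's English description precedes it below -/
import Mathlib

section
/- Let L be a solvable Lie algebra with fixed chief series 0 = A₀ < A₁ < … < A_n = L, U a subalgebra, and B a U-prefrattini subalgebra. Then dim B = Σ_{i ∉ I} (dim A_i − dim A_{i-1}), where I is the set of indices of non-U-Frattini chief factors. In particular all U-prefrattini subalgebras have the same dimension. -/
open LieAlgebra

namespace Paper

variable {F : Type*} [Field F] {L : Type*} [LieRing L] [LieAlgebra F L]

/-- The interval `[U:L]` is complemented: every subalgebra containing `U`
has a complement over `U`. -/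
def IsComplementedInterval (U : LieSubalgebra F L) : Prop :=
  ∀ S : LieSubalgebra F L, U ≤ S →
    ∃ T : LieSubalgebra F L, U ≤ T ∧ S ⊓ T = U ∧ S ⊔ T = ⊤

/-- `Ω(U,L)`. -/
def Omega (U : LieSubalgebra F L) : Set (LieSubalgebra F L) :=
  {S | U ≤ S ∧ IsComplementedInterval S}

/-- `Ω(U,L)_min`, the inclusion-minimal elements. -/
def OmegaMin (U : LieSubalgebra F L) : Set (LieSubalgebra F L) :=
  {S | S ∈ Omega U ∧ ∀ T ∈ Omega U, T ≤ S → T = S}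

/-- `φ(U,L)`, the intersection of all maximal subalgebras containing `U`. -/
def phi (U : LieSubalgebra F L) : LieSubalgebra F L :=
  sInf {M : LieSubalgebra F L | IsCoatom M ∧ U ≤ M}

/-- A subalgebra which is an ideal of `L`. -/
def IsIdealSubalg (A : LieSubalgebra F L) : Prop :=
  ∀ x : L, ∀ a ∈ A, ⁅x, a⁆ ∈ A

/-- A minimal ideal of `L`. -/
def IsMinimalIdeal (A : LieSubalgebra F L) : Prop :=
  A ≠ ⊥ ∧ IsIdealSubalg A ∧
    ∀ B : LieSubalgebra F L, IsIdealSubalg B → B ≤ A → B = ⊥ ∨ B = A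

/-- A chief series `0 = A 0 < A 1 < … < A n = L`. -/
def IsChiefSeries (A : ℕ → LieSubalgebra F L) (n : ℕ) : Prop :=
  A 0 = ⊥ ∧ A n = ⊤ ∧ (∀ i, IsIdealSubalg (A i)) ∧
    ∀ i < n, A i < A (i + 1) ∧
      ∀ B : LieSubalgebra F L, IsIdealSubalg B → A i ≤ B → B ≤ A (i + 1) →
        B = A i ∨ B = A (i + 1)

/-- The chief factor `A/B` is `U`-Frattini. -/
def IsUFrattiniFactor (U B A : LieSubalgebra F L) : Prop :=
  A ≤ phi (U ⊔ B) ∨ U ⊔ B = ⊤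

/-- `B` is a `U`-prefrattini subalgebra with respect to the series `A`. -/
def IsPrefrattiniWrt (U : LieSubalgebra F L) (A : ℕ → LieSubalgebra F L) (n : ℕ)
    (B : LieSubalgebra F L) : Prop :=
  ∃ M : ℕ → LieSubalgebra F L,
    (∀ i < n, ¬ IsUFrattiniFactor U (A i) (A (i + 1)) →
      IsCoatom (M i) ∧ U ⊔ A i ≤ M i ∧ ¬ A (i + 1) ≤ M i) ∧
    B = ⨅ i ∈ {i | i < n ∧ ¬ IsUFrattiniFactor U (A i) (A (i + 1))}, M i

/-- `B` is a `U`-prefrattini subalgebra of `L` (with respect to some chief series). -/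
def IsPrefrattini (U B : LieSubalgebra F L) : Prop :=
  ∃ (n : ℕ) (A : ℕ → LieSubalgebra F L), IsChiefSeries A n ∧ IsPrefrattiniWrt U A n B

/-- The lower central series of an ideal `I` of `L` (computed inside `L`):
`idealLCS I k = I^{k+1}`. -/
def idealLCS (I : LieIdeal F L) : ℕ → LieIdeal F L
  | 0 => I
  | k + 1 => ⁅I, idealLCS I k⁆

/-- The nilpotent residual `L^∞`. -/
def nilpotentResidual (F : Type*) (L : Type*) [Field F] [LieRing L] [LieAlgebra F L] :
    LieIdeal F L :=
  ⨅ k, LieModule.lowerCentralSeries F L L k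

/-- The exponential `exp (ad x)` truncated below `p` (all higher terms vanish when
`ad x` has nilpotency index at most `p`). -/
noncomputable def expAd (F : Type*) {L : Type*} [Field F] [LieRing L] [LieAlgebra F L]
    (p : ℕ) (x : L) : L →ₗ[F] L :=
  ∑ r ∈ Finset.range p, (r.factorial : F)⁻¹ • ((LieAlgebra.ad F L x : Module.End F L) ^ r : Module.End F L)

/-- The quotient map `L → L ⧸ I` as a morphism of Lie algebras. -/
def quotLieHom (I : LieIdeal F L) : L →ₗ⁅F⁆ L ⧸ I :=
  { I.toSubmodule.mkQ with map_lie' := rfl }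

end Paper

namespace Paper
variable {F : Type*} [Field F] {L : Type*} [LieRing L] [LieAlgebra F L]

theorem abelian_factor [LieAlgebra.IsSolvable L]
    {A : ℕ → LieSubalgebra F L} {n : ℕ} (hA : IsChiefSeries A n) {i : ℕ} (hi : i < n)
    {x y : L} (hx : x ∈ A (i + 1)) (hy : y ∈ A (i + 1)) : ⁅x, y⁆ ∈ A i := by
  obtain ⟨hA0, hAn, hAid, hAch⟩ := hA
  set S : Set L := {z | ∃ u ∈ A (i + 1), ∃ v ∈ A (i + 1), ⁅u, v⁆ = z} with hS
  set P : Submodule F L := (A i : Submodule F L) ⊔ Submodule.span F S with hP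
  have hSA : S ⊆ (A (i + 1) : Set L) := by
    rintro z ⟨u, hu, v, hv, rfl⟩
    exact (A (i + 1)).lie_mem hu hv
  have hPle : P ≤ (A (i + 1) : Submodule F L) := by
    refine sup_le ?_ ?_
    · intro w hw; exact (hAch i hi).1.le hw
    · exact Submodule.span_le.2 hSA
  have hideal : ∀ z : L, ∀ a ∈ P, ⁅z, a⁆ ∈ P := by
    intro z
    have hbr : ∀ c ∈ Submodule.span F S, ⁅z, c⁆ ∈ P := by
      intro c hc
      induction hc using Submodule.span_induction with
      | mem w hw =>
        obtain ⟨u, hu, v, hv, rfl⟩ := hw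
        rw [leibniz_lie]
        refine Submodule.add_mem _ ?_ ?_
        · exact Submodule.mem_sup_right (Submodule.subset_span ⟨⁅z, u⁆, hAid (i+1) z u hu, v, hv, rfl⟩)
        · exact Submodule.mem_sup_right (Submodule.subset_span ⟨u, hu, ⁅z, v⁆, hAid (i+1) z v hv, rfl⟩)
      | zero => rw [lie_zero]; exact P.zero_mem
      | add w₁ w₂ _ _ h1 h2 => rw [lie_add]; exact P.add_mem h1 h2
      | smul t w _ h => rw [lie_smul]; exact P.smul_mem t h
    intro a ha
    obtain ⟨b, hb, c, hc, rfl⟩ := Submodule.mem_sup.1 ha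
    rw [lie_add]
    exact Submodule.add_mem _ (Submodule.mem_sup_left (hAid i z b hb)) (hbr c hc)
  set D : LieSubalgebra F L := { P with lie_mem' := fun {u v} _ hv => hideal u v hv } with hD
  have hmemD : ∀ w : L, w ∈ D ↔ w ∈ P := fun w => Iff.rfl
  have hDid : IsIdealSubalg D := fun z a ha => hideal z a ha
  have h1 : A i ≤ D := fun w hw => Submodule.mem_sup_left hw
  have h2 : D ≤ A (i + 1) := fun w hw => hPle hw
  rcases (hAch i hi).2 D hDid h1 h2 with h | h
  · have : ⁅x, y⁆ ∈ D :=
      Submodule.mem_sup_right (Submodule.subset_span ⟨x, hx, y, hy, rfl⟩)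
    rwa [h] at this
  · exfalso
    have key : ∀ k, (A (i + 1) : Submodule F L) ≤
        (LieAlgebra.derivedSeries F L k : Submodule F L) ⊔ (A i : Submodule F L) := by
      intro k
      induction k with
      | zero =>
        rw [LieAlgebra.derivedSeries_def, LieAlgebra.derivedSeriesOfIdeal_zero]
        simp
      | succ k ih =>
        intro w hw
        have hwD : w ∈ P := by rw [← hmemD, h]; exact hw
        obtain ⟨b, hb, c, hc, rfl⟩ := Submodule.mem_sup.1 hwD
        refine Submodule.add_mem _ (Submodule.mem_sup_right hb) ?_
        refine Submodule.span_le.2 ?_ hc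
        rintro w ⟨u, hu, v, hv, rfl⟩
        · 
          obtain ⟨d, hd, a, ha, rfl⟩ := Submodule.mem_sup.1 (ih hu)
          obtain ⟨d', hd', a', ha', rfl⟩ := Submodule.mem_sup.1 (ih hv)
          have e : ⁅d + a, d' + a'⁆ = ⁅d, d'⁆ + (⁅d, a'⁆ + (⁅a, d'⁆ + ⁅a, a'⁆)) := by
            rw [lie_add, add_lie, add_lie]; abel
          rw [e]
          refine Submodule.add_mem _ (Submodule.mem_sup_left ?_) ?_
          · have : ⁅d, d'⁆ ∈ ⁅(LieAlgebra.derivedSeries F L k : LieIdeal F L),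
                (LieAlgebra.derivedSeries F L k : LieIdeal F L)⁆ :=
              LieSubmodule.lie_mem_lie hd hd'
            rw [LieAlgebra.derivedSeries_def, LieAlgebra.derivedSeriesOfIdeal_succ]
            exact this
          · refine Submodule.mem_sup_right ?_
            have h1' : ⁅d, a'⁆ ∈ A i := by
              have := hAid i d a' ha'; exact this
            have h2' : ⁅a, d'⁆ ∈ A i := by
              rw [← lie_skew]
              exact (A i).toSubmodule.neg_mem (hAid i d' a ha)
            have h3' : ⁅a, a'⁆ ∈ A i := by
              rw [← lie_skew]
              exact (A i).toSubmodule.neg_mem (hAid i a' a ha)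
            exact Submodule.add_mem _ h1' (Submodule.add_mem _ h2' h3')
    obtain ⟨k, hk⟩ := LieAlgebra.IsSolvable.solvable (R := F) (L := L)
    have := key k
    rw [hk] at this
    have hle : (A (i + 1) : Submodule F L) ≤ (A i : Submodule F L) := by
      intro w hw
      have := this hw
      rcases Submodule.mem_sup.1 this with ⟨b, hb, c, hc, rfl⟩
      have hb0 : b = 0 := by simpa using hb
      simpa [hb0] using hc
    exact (hAch i hi).1.not_ge (fun w hw => hle hw)

theorem maximal_inter [LieAlgebra.IsSolvable L]
    {A : ℕ → LieSubalgebra F L} {n : ℕ} (hA : IsChiefSeries A n) {i : ℕ} (hi : i < n)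
    {M : LieSubalgebra F L} (hM : IsCoatom M) (hAiM : A i ≤ M) (hMA : ¬ A (i + 1) ≤ M) :
    (M : Submodule F L) ⊔ (A (i + 1) : Submodule F L) = ⊤ ∧
      (M : Submodule F L) ⊓ (A (i + 1) : Submodule F L) = (A i : Submodule F L) := by
  obtain ⟨hA0, hAn, hAid, hAch⟩ := hA
  set P : Submodule F L := (M : Submodule F L) ⊔ (A (i + 1) : Submodule F L) with hP
  have hlie : ∀ {u v : L}, u ∈ P → v ∈ P → ⁅u, v⁆ ∈ P := by
    intro u v hu hv
    obtain ⟨m, hm, a, ha, rfl⟩ := Submodule.mem_sup.1 hu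
    obtain ⟨m', hm', a', ha', rfl⟩ := Submodule.mem_sup.1 hv
    have e : ⁅m + a, m' + a'⁆ = ⁅m, m'⁆ + (⁅m, a'⁆ + (⁅a, m'⁆ + ⁅a, a'⁆)) := by
      rw [lie_add, add_lie, add_lie]; abel
    rw [e]
    refine Submodule.add_mem _ (Submodule.mem_sup_left (M.lie_mem hm hm')) ?_
    refine Submodule.mem_sup_right ?_
    refine Submodule.add_mem _ (hAid (i+1) m a' ha') (Submodule.add_mem _ ?_ ?_)
    · rw [← lie_skew]; exact (A (i+1)).toSubmodule.neg_mem (hAid (i+1) m' a ha)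
    · rw [← lie_skew]; exact (A (i+1)).toSubmodule.neg_mem (hAid (i+1) a' a ha)
  set Sa : LieSubalgebra F L := { P with lie_mem' := fun hu hv => hlie hu hv } with hSa
  have hMS : M ≤ Sa := fun w hw => Submodule.mem_sup_left hw
  have hAS : A (i + 1) ≤ Sa := fun w hw => Submodule.mem_sup_right hw
  have hlt : M < Sa := lt_of_le_of_ne hMS (fun hEq => hMA (fun w hw => by
    have : w ∈ Sa := hAS hw
    rwa [← hEq] at this))
  have hTopS : Sa = ⊤ := hM.2 Sa hlt
  have hsup : P = ⊤ := by
    have := congrArg (fun (K : LieSubalgebra F L) => (K : Submodule F L)) hTopS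
    simpa only [LieSubalgebra.top_toSubmodule] using this
  refine ⟨hsup, ?_⟩
  set K : LieSubalgebra F L := M ⊓ A (i + 1) with hK
  have hKid : IsIdealSubalg K := by
    intro x a ha
    rw [LieSubalgebra.mem_inf] at ha
    have hx : x ∈ P := hsup ▸ Submodule.mem_top
    obtain ⟨m, hm, b, hb, rfl⟩ := Submodule.mem_sup.1 hx
    have h1 : ⁅m, a⁆ ∈ K := by
      rw [LieSubalgebra.mem_inf]; exact ⟨M.lie_mem hm ha.1, hAid (i+1) m a ha.2⟩
    have h2 : ⁅b, a⁆ ∈ K := by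
      have hab : ⁅b, a⁆ ∈ A i := abelian_factor ⟨hA0, hAn, hAid, hAch⟩ hi hb ha.2
      rw [LieSubalgebra.mem_inf]; exact ⟨hAiM hab, (hAch i hi).1.le hab⟩
    rw [add_lie]; exact K.toSubmodule.add_mem h1 h2
  rcases (hAch i hi).2 K hKid (le_inf hAiM (hAch i hi).1.le) inf_le_right with h | h
  · exact congrArg LieSubalgebra.toSubmodule h
  · exfalso
    refine hMA (fun w hw => ?_)
    have hwK : w ∈ K := h.symm ▸ hw
    rw [hK, LieSubalgebra.mem_inf] at hwK
    exact hwK.1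
theorem mem_iInf' {ι : Sort*} (f : ι → LieSubalgebra F L) (x : L) :
    x ∈ iInf f ↔ ∀ i, x ∈ f i := by
  rw [iInf, ← LieSubalgebra.mem_coe, LieSubalgebra.coe_sInf]
  simp

theorem toSub_lt {S T : LieSubalgebra F L} (h : S < T) :
    (S : Submodule F L) < (T : Submodule F L) :=
  lt_of_le_of_ne (fun x hx => h.le hx)
    (fun e => h.ne (LieSubalgebra.toSubmodule_injective e))


end Paper

open scoped Classical in
theorem stmt11 {F : Type*} [Field F] {L : Type*} [LieRing L] [LieAlgebra F L]
    [LieAlgebra.IsSolvable L] [FiniteDimensional F L]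
    (U : LieSubalgebra F L) (n : ℕ) (A : ℕ → LieSubalgebra F L)
    (hA : Paper.IsChiefSeries A n) (B : LieSubalgebra F L)
    (hB : Paper.IsPrefrattiniWrt U A n B) :
    (Module.finrank F B =
      ∑ i ∈ (Finset.range n).filter (fun i => Paper.IsUFrattiniFactor U (A i) (A (i + 1))),
        (Module.finrank F (A (i + 1)) - Module.finrank F (A i))) ∧
    (∀ B' : LieSubalgebra F L, Paper.IsPrefrattiniWrt U A n B' →
      Module.finrank F B' = Module.finrank F B) := by
  obtain ⟨hA0, hAn, hAid, hAch⟩ := hA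
  have hA' : Paper.IsChiefSeries A n := ⟨hA0, hAn, hAid, hAch⟩
  have hmono : ∀ i < n, Module.finrank F (A i) ≤ Module.finrank F (A (i + 1)) := by
    intro i hi
    exact le_of_lt (Submodule.finrank_lt_finrank_of_lt (Paper.toSub_lt (hAch i hi).1))
  have htel : ∀ m, m ≤ n →
      (∑ i ∈ Finset.range m,
        (Module.finrank F (A (i + 1)) - Module.finrank F (A i))) = Module.finrank F (A m) := by
    intro m
    induction m with
    | zero =>
      intro _
      have h0 : Module.finrank F (A 0) = 0 := by
        rw [hA0]
        show Module.finrank F ((⊥ : LieSubalgebra F L) : Submodule F L) = 0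
        rw [LieSubalgebra.bot_toSubmodule]
        exact finrank_bot F L
      simp [h0]
    | succ m ih =>
      intro hm
      rw [Finset.sum_range_succ, ih (by omega)]
      have := hmono m (by omega)
      omega
  have htot : (∑ i ∈ Finset.range n,
      (Module.finrank F (A (i + 1)) - Module.finrank F (A i))) = Module.finrank F L := by
    rw [htel n le_rfl]
    rw [hAn]
    show Module.finrank F ((⊤ : LieSubalgebra F L) : Submodule F L) = _
    rw [LieSubalgebra.top_toSubmodule]
    exact finrank_top F L
  have main : ∀ B : LieSubalgebra F L, Paper.IsPrefrattiniWrt U A n B →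
      Module.finrank F B =
        ∑ i ∈ (Finset.range n).filter (fun i => Paper.IsUFrattiniFactor U (A i) (A (i + 1))),
          (Module.finrank F (A (i + 1)) - Module.finrank F (A i)) := by
    clear hB B
    intro B hB
    obtain ⟨M, hM, rfl⟩ := hB
    set T : Finset ℕ :=
      (Finset.range n).filter (fun i => ¬ Paper.IsUFrattiniFactor U (A i) (A (i + 1))) with hT
    have key : ∀ d j, j + d = n →
        ((A j : Submodule F L) ≤ (T.filter (fun i => j ≤ i)).inf (fun i => (M i : Submodule F L))) ∧
        Module.finrank F ↥((T.filter (fun i => j ≤ i)).inf (fun i => (M i : Submodule F L))) +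
          ∑ i ∈ T.filter (fun i => j ≤ i),
            (Module.finrank F (A (i + 1)) - Module.finrank F (A i)) = Module.finrank F L := by
      intro d
      induction d with
      | zero =>
        intro j hj
        have hjn : j = n := by omega
        subst hjn
        have hempty : T.filter (fun i => j ≤ i) = ∅ := by
          rw [Finset.filter_eq_empty_iff]
          intro k hk
          have hk' : k < j := Finset.mem_range.1 (Finset.mem_filter.1 hk).1
          omega
        rw [hempty, Finset.inf_empty, Finset.sum_empty]
        refine ⟨le_top, ?_⟩
        simp [finrank_top]
      | succ d ih =>
        intro j hj
        have hjn : j < n := by omega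
        obtain ⟨ihle, iheq⟩ := ih (j + 1) (by omega)
        have hAj1 : (A j : Submodule F L) ≤ (A (j + 1) : Submodule F L) := fun w hw =>
          (hAch j hjn).1.le hw
        by_cases hjT : j ∈ T
        · have hjnot : j ∉ T.filter (fun i => j + 1 ≤ i) := by simp
          have hfe : T.filter (fun i => j ≤ i) = insert j (T.filter (fun i => j + 1 ≤ i)) := by
            ext k
            simp only [Finset.mem_filter, Finset.mem_insert]
            constructor
            · rintro ⟨hkT, hjk⟩
              rcases eq_or_lt_of_le hjk with h | h
              · exact Or.inl h.symm
              · exact Or.inr ⟨hkT, h⟩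
            · rintro (rfl | ⟨hkT, h⟩)
              · exact ⟨hjT, le_refl _⟩
              · exact ⟨hkT, by omega⟩
          have hjP : ¬ Paper.IsUFrattiniFactor U (A j) (A (j + 1)) :=
            (Finset.mem_filter.1 hjT).2
          obtain ⟨hcoat, hUle, hnle⟩ := hM j hjn hjP
          have hAjM : A j ≤ M j := le_trans le_sup_right hUle
          obtain ⟨hsup, hinf⟩ := Paper.maximal_inter hA' hjn hcoat hAjM hnle
          have hfr1 : Module.finrank F L + Module.finrank F ((A j : Submodule F L)) =
              Module.finrank F ((M j : Submodule F L)) + Module.finrank F ((A (j + 1) : Submodule F L)) := by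
            have h := Submodule.finrank_sup_add_finrank_inf_eq
              (M j : Submodule F L) (A (j + 1) : Submodule F L)
            rw [hsup, hinf, finrank_top] at h
            exact h
          set C := (T.filter (fun i => j + 1 ≤ i)).inf (fun i => (M i : Submodule F L)) with hC
          have hsup2 : (M j : Submodule F L) ⊔ C = ⊤ := by
            rw [eq_top_iff, ← hsup]
            exact sup_le_sup_left (le_trans (le_of_eq rfl) ihle) _
          have hfr2 := Submodule.finrank_sup_add_finrank_inf_eq (M j : Submodule F L) C
          rw [hsup2, finrank_top] at hfr2
          rw [hfe, Finset.inf_insert, Finset.sum_insert hjnot, ← hC]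
          refine ⟨le_inf (fun w hw => hAjM hw) (le_trans hAj1 ihle), ?_⟩
          have hm := hmono j hjn
          have b1 : Module.finrank F ((A j : Submodule F L)) = Module.finrank F (A j) := rfl
          have b2 : Module.finrank F ((A (j + 1) : Submodule F L)) =
            Module.finrank F (A (j + 1)) := rfl
          omega
        · have hfe : T.filter (fun i => j ≤ i) = T.filter (fun i => j + 1 ≤ i) := by
            ext k
            simp only [Finset.mem_filter]
            constructor
            · rintro ⟨hkT, hjk⟩
              have hne : k ≠ j := fun e => hjT (e ▸ hkT)
              exact ⟨hkT, by omega⟩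
            · rintro ⟨hkT, h⟩
              exact ⟨hkT, by omega⟩
          rw [hfe]
          exact ⟨le_trans hAj1 ihle, iheq⟩
    obtain ⟨-, heq⟩ := key n 0 (by omega)
    have hT0 : T.filter (fun i => 0 ≤ i) = T := Finset.filter_true_of_mem (fun _ _ => Nat.zero_le _)
    rw [hT0] at heq
    have hBsub : ((⨅ i ∈ {i | i < n ∧ ¬ Paper.IsUFrattiniFactor U (A i) (A (i + 1))}, M i :
        LieSubalgebra F L) : Submodule F L) = T.inf (fun i => (M i : Submodule F L)) := by
      ext x
      rw [LieSubalgebra.mem_toSubmodule, Submodule.mem_finsetInf]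
      rw [Paper.mem_iInf']
      constructor
      · intro h i hi
        have hi' := Finset.mem_filter.1 hi
        have := h i
        rw [Paper.mem_iInf'] at this
        exact this ⟨Finset.mem_range.1 hi'.1, hi'.2⟩
      · intro h i
        rw [Paper.mem_iInf']
        rintro ⟨h1, h2⟩
        exact h i (Finset.mem_filter.2 ⟨Finset.mem_range.2 h1, h2⟩)
    have hBfr : Module.finrank F
        (⨅ i ∈ {i | i < n ∧ ¬ Paper.IsUFrattiniFactor U (A i) (A (i + 1))}, M i :
          LieSubalgebra F L) =
        Module.finrank F ↥(T.inf (fun i => (M i : Submodule F L))) := by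
      show Module.finrank F ((⨅ i ∈ {i | i < n ∧ ¬ Paper.IsUFrattiniFactor U (A i) (A (i + 1))}, M i :
        LieSubalgebra F L) : Submodule F L) = _
      rw [hBsub]
    have hsplit := Finset.sum_filter_add_sum_filter_not (Finset.range n)
      (fun i => Paper.IsUFrattiniFactor U (A i) (A (i + 1)))
      (fun i => Module.finrank F (A (i + 1)) - Module.finrank F (A i))
    have heq2 : Module.finrank F
        (⨅ i ∈ {i | i < n ∧ ¬ Paper.IsUFrattiniFactor U (A i) (A (i + 1))}, M i :
          LieSubalgebra F L) +
        ∑ i ∈ (Finset.range n).filter (fun i => ¬ Paper.IsUFrattiniFactor U (A i) (A (i + 1))),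
          (Module.finrank F (A (i + 1)) - Module.finrank F (A i)) = Module.finrank F L := by
      rw [hBfr]
      rw [hT] at heq
      exact heq
    omega
  exact ⟨main B hB, fun B' hB' => (main B' hB').trans (main B hB).symm⟩
end

section
/- Let L be a solvable Lie algebra and U a subalgebra. Every U-prefrattini subalgebra B of L belongs to Ω(U,L); that is, U ⊆ B and the interval [B:L] is complemented. -/
open LieAlgebra

section Stmt12Aux

variable {F : Type*} [Field F] {L : Type*} [LieRing L] [LieAlgebra F L]

/-- The submodule sum of a subalgebra and an ideal is a subalgebra. -/
def Stmt12.sumSubalg (X A : LieSubalgebra F L) (hA : Paper.IsIdealSubalg A) :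
    LieSubalgebra F L where
  toSubmodule := X.toSubmodule ⊔ A.toSubmodule
  lie_mem' := by
    intro x y hx hy
    obtain ⟨x1, hx1, a1, ha1, rfl⟩ := Submodule.mem_sup.mp hx
    obtain ⟨x2, hx2, a2, ha2, rfl⟩ := Submodule.mem_sup.mp hy
    have h1 : ⁅x1, x2⁆ ∈ X := X.lie_mem hx1 hx2
    have h2 : ⁅x1, a2⁆ ∈ A := hA x1 a2 ha2
    have h3 : ⁅a1, x2⁆ ∈ A := lie_skew a1 x2 ▸ neg_mem (hA x2 a1 ha1)
    have h4 : ⁅a1, a2⁆ ∈ A := hA a1 a2 ha2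
    have hexp : ⁅x1 + a1, x2 + a2⁆ = ⁅x1, x2⁆ + (⁅x1, a2⁆ + (⁅a1, x2⁆ + ⁅a1, a2⁆)) := by
      rw [add_lie, lie_add, lie_add]; abel
    show ⁅x1 + a1, x2 + a2⁆ ∈ X.toSubmodule ⊔ A.toSubmodule
    rw [hexp]
    exact Submodule.add_mem _ (Submodule.mem_sup_left h1)
      (Submodule.mem_sup_right (A.toSubmodule.add_mem h2 (A.toSubmodule.add_mem h3 h4)))

lemma Stmt12.mem_sup_of_ideal {X A : LieSubalgebra F L} (hA : Paper.IsIdealSubalg A) {x : L}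
    (hx : x ∈ X ⊔ A) : ∃ y ∈ X, ∃ a ∈ A, y + a = x := by
  have hle : X ⊔ A ≤ Stmt12.sumSubalg X A hA :=
    sup_le (fun z hz => Submodule.mem_sup_left hz) (fun z hz => Submodule.mem_sup_right hz)
  exact Submodule.mem_sup.mp (hle hx)

/-- Chief factors of a solvable Lie algebra are abelian. -/
lemma Stmt12.chief_factor_abelian [LieAlgebra.IsSolvable L]
    {A : ℕ → LieSubalgebra F L} {n : ℕ} (hA : Paper.IsChiefSeries A n)
    {j : ℕ} (hj : j < n) : ∀ a ∈ A (j + 1), ∀ b ∈ A (j + 1), ⁅a, b⁆ ∈ A j := by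
  set N := A (j + 1) with hN
  set K := A j with hK
  have hKN : K ≤ N := le_of_lt (hA.2.2.2 j hj).1
  have hNid : Paper.IsIdealSubalg N := hA.2.2.1 (j + 1)
  have hKid : Paper.IsIdealSubalg K := hA.2.2.1 j
  set s : Set L := {z | ∃ a ∈ N, ∃ b ∈ N, ⁅a, b⁆ = z} with hs
  set P : Submodule F L := K.toSubmodule ⊔ Submodule.span F s with hP
  have hsub : ∀ x : L, ∀ p ∈ P, ⁅x, p⁆ ∈ P := by
    intro x p hp
    have hmap : Submodule.map (LieAlgebra.ad F L x) P ≤ P := by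
      rw [hP, Submodule.map_sup]
      apply sup_le
      · intro z hz
        obtain ⟨k, hk, rfl⟩ := hz
        exact Submodule.mem_sup_left (hKid x k hk)
      · rw [Submodule.map_span]
        apply Submodule.span_le.mpr
        rintro z ⟨w, ⟨a, ha, b, hb, rfl⟩, rfl⟩
        have hexp : (LieAlgebra.ad F L x) ⁅a, b⁆ = ⁅⁅x, a⁆, b⁆ + ⁅a, ⁅x, b⁆⁆ := by
          rw [LieAlgebra.ad_apply, leibniz_lie]
        rw [hexp]
        refine Submodule.add_mem _ ?_ ?_
        · exact Submodule.mem_sup_right (Submodule.subset_span ⟨⁅x, a⁆, hNid x a ha, b, hb, rfl⟩)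
        · exact Submodule.mem_sup_right (Submodule.subset_span ⟨a, ha, ⁅x, b⁆, hNid x b hb, rfl⟩)
    exact hmap ⟨p, hp, rfl⟩
  set C : LieSubalgebra F L :=
    { toSubmodule := P
      lie_mem' := fun {x y} _ hy => hsub x y hy } with hC
  have hCid : Paper.IsIdealSubalg C := fun x a ha => hsub x a ha
  have hKC : K ≤ C := fun z hz => Submodule.mem_sup_left hz
  have hCN : C ≤ N := by
    intro z hz
    have hle : P ≤ N.toSubmodule := sup_le (fun w hw => hKN hw)
      (Submodule.span_le.mpr (by rintro w ⟨a, ha, b, hb, rfl⟩; exact N.lie_mem ha hb))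
    exact hle hz
  rcases (hA.2.2.2 j hj).2 C hCid hKC hCN with hCK | hCNeq
  · intro a ha b hb
    have hmem : ⁅a, b⁆ ∈ C := Submodule.mem_sup_right (Submodule.subset_span ⟨a, ha, b, hb, rfl⟩)
    rw [hCK] at hmem
    exact hmem
  · exfalso
    have key : ∀ m : ℕ, N.toSubmodule ≤
        (LieAlgebra.derivedSeries F L m).toSubmodule ⊔ K.toSubmodule := by
      intro m
      induction m with
      | zero =>
        intro z _
        apply Submodule.mem_sup_left
        show z ∈ (LieAlgebra.derivedSeries F L 0).toSubmodule
        rw [LieAlgebra.derivedSeries_def, LieAlgebra.derivedSeriesOfIdeal_zero]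
        trivial
      | succ m ih =>
        intro z hz
        have hzC : z ∈ C := by rw [hCNeq]; exact hz
        have hle : P ≤ (LieAlgebra.derivedSeries F L (m + 1)).toSubmodule ⊔ K.toSubmodule := by
          apply sup_le
          · exact le_sup_right
          · apply Submodule.span_le.mpr
            rintro w ⟨a, ha, b, hb, rfl⟩
            obtain ⟨d1, hd1, k1, hk1, rfl⟩ := Submodule.mem_sup.mp (ih ha)
            obtain ⟨d2, hd2, k2, hk2, rfl⟩ := Submodule.mem_sup.mp (ih hb)
            have hexp : ⁅d1 + k1, d2 + k2⁆ = ⁅d1, d2⁆ + (⁅d1, k2⁆ + (⁅k1, d2⁆ + ⁅k1, k2⁆)) := by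
              rw [add_lie, lie_add, lie_add]; abel
            rw [hexp]
            refine Submodule.add_mem _ (Submodule.mem_sup_left ?_)
              (Submodule.mem_sup_right (K.toSubmodule.add_mem ?_ (K.toSubmodule.add_mem ?_ ?_)))
            · show ⁅d1, d2⁆ ∈ LieAlgebra.derivedSeries F L (m + 1)
              have hds : LieAlgebra.derivedSeries F L (m + 1) =
                  ⁅LieAlgebra.derivedSeries F L m, LieAlgebra.derivedSeries F L m⁆ := by
                simp [LieAlgebra.derivedSeries_def]
              rw [hds]
              exact LieSubmodule.lie_mem_lie hd1 hd2
            · exact hKid d1 k2 hk2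
            · exact lie_skew k1 d2 ▸ neg_mem (hKid d2 k1 hk1)
            · exact hKid k1 k2 hk2
        exact hle hzC
    obtain ⟨k, hk⟩ := LieAlgebra.IsSolvable.solvable (R := F) (L := L)
    have hNK : N ≤ K := by
      intro z hz
      have hzm := key k hz
      rw [hk] at hzm
      rcases Submodule.mem_sup.mp hzm with ⟨d, hd, kk, hkk, rfl⟩
      have hd0 : d = 0 := by
        simpa using hd
      rw [hd0, zero_add]
      exact hkk
    exact (not_le_of_gt (hA.2.2.2 j hj).1) hNK

end Stmt12Aux


theorem stmt12 {F : Type*} [Field F] {L : Type*} [LieRing L] [LieAlgebra F L]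
    [LieAlgebra.IsSolvable L] [FiniteDimensional F L]
    (U : LieSubalgebra F L) (n : ℕ) (A : ℕ → LieSubalgebra F L)
    (hA : Paper.IsChiefSeries A n) (B : LieSubalgebra F L)
    (hB : Paper.IsPrefrattiniWrt U A n B) :
    B ∈ Paper.Omega U := by
  obtain ⟨M, hM, hBdef⟩ := hB
  set I : Set ℕ := {i | i < n ∧ ¬ Paper.IsUFrattiniFactor U (A i) (A (i + 1))} with hIdef
  -- U is contained in B
  have hUB : U ≤ B := by
    rw [hBdef]
    exact le_iInf₂ fun i hi => le_trans le_sup_left (hM i hi.1 hi.2).2.1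
  refine ⟨hUB, ?_⟩
  -- monotonicity of the chief series
  have hmono : ∀ a b : ℕ, a ≤ b → b ≤ n → A a ≤ A b := by
    intro a b hab
    induction b, hab using Nat.le_induction with
    | base => intro _; exact le_rfl
    | succ b hab ih =>
      intro hbn
      exact (ih (by omega)).trans (le_of_lt (hA.2.2.2 b (by omega)).1)
  set D : ℕ → LieSubalgebra F L := fun j => ⨅ i ∈ {i | i ∈ I ∧ j ≤ i}, M i with hDdef
  have hsupl : ∀ (X Y : LieSubalgebra F L) {x : L}, x ∈ X → x ∈ X ⊔ Y :=
    fun X Y {x} hx => (le_sup_left : X ≤ X ⊔ Y) hx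
  have hsupr : ∀ (X Y : LieSubalgebra F L) {x : L}, x ∈ Y → x ∈ X ⊔ Y :=
    fun X Y {x} hx => (le_sup_right : Y ≤ X ⊔ Y) hx
  have hDle : ∀ j i, i ∈ I → j ≤ i → D j ≤ M i := by
    intro j i h1 h2
    rw [hDdef]
    exact iInf₂_le i ⟨h1, h2⟩
  have hDmono : ∀ j, D j ≤ D (j + 1) := by
    intro j
    conv_rhs => rw [hDdef]
    exact le_iInf₂ fun i hi => hDle j i hi.1 (le_trans (Nat.le_succ j) hi.2)
  have hAD : ∀ j, j ≤ n → A j ≤ D j := by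
    intro j hj
    rw [hDdef]
    exact le_iInf₂ fun i hi =>
      (hmono j i hi.2 (le_of_lt hi.1.1)).trans (le_sup_right.trans (hM i hi.1.1 hi.1.2).2.1)
  have hDnotI : ∀ j, j ∉ I → D j = D (j + 1) := by
    intro j hjI
    refine le_antisymm (hDmono j) ?_
    conv_rhs => rw [hDdef]
    refine le_iInf₂ fun i hi => hDle (j + 1) i hi.1 ?_
    have hne : i ≠ j := fun h => hjI (h ▸ hi.1)
    have h2 : j ≤ i := hi.2
    omega
  have hDI : ∀ j, j ∈ I → D j = D (j + 1) ⊓ M j := by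
    intro j hjI
    refine le_antisymm (le_inf (hDmono j) (hDle j j hjI le_rfl)) ?_
    conv_rhs => rw [hDdef]
    refine le_iInf₂ fun i hi => ?_
    rcases eq_or_ne i j with rfl | hne
    · exact inf_le_right
    · exact inf_le_left.trans (hDle (j + 1) i hi.1 (by have h2 : j ≤ i := hi.2; omega))
  -- main downward induction
  have key : ∀ m j, j + m = n → Paper.IsComplementedInterval (D j) := by
    intro m
    induction m with
    | zero =>
      intro j hj
      have hDtop : D j = ⊤ := by
        rw [eq_top_iff, hDdef]
        exact le_iInf₂ fun i hi => absurd hi.1.1 (by have h2 : j ≤ i := hi.2; omega)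
      rw [hDtop]
      intro S hS
      have hS' : S = ⊤ := top_unique hS
      exact ⟨⊤, le_top, by rw [hS', inf_top_eq], by rw [hS', top_sup_eq]⟩
    | succ m ih =>
      intro j hj
      have hIH := ih (j + 1) (by omega)
      have hjn : j < n := by omega
      by_cases hjI : j ∈ I
      swap
      · rw [hDnotI j hjI]; exact hIH
      obtain ⟨hMco, hUAM, hNM⟩ := hM j hjn hjI.2
      have hNid : Paper.IsIdealSubalg (A (j + 1)) := hA.2.2.1 (j + 1)
      have hKN : A j ≤ A (j + 1) := le_of_lt (hA.2.2.2 j hjn).1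
      have hKM : A j ≤ M j := le_sup_right.trans hUAM
      have habN : ∀ a ∈ A (j + 1), ∀ b ∈ A (j + 1), ⁅a, b⁆ ∈ A j :=
        Stmt12.chief_factor_abelian hA hjn
      have hDj : D j = D (j + 1) ⊓ M j := hDI j hjI
      have hKD : A j ≤ D j := hAD j (le_of_lt hjn)
      have hND : A (j + 1) ≤ D (j + 1) := hAD (j + 1) (by omega)
      have hMNtop : M j ⊔ A (j + 1) = ⊤ :=
        hMco.2 _ (lt_of_le_of_ne le_sup_left (fun h => hNM (le_sup_right.trans h.ge)))
      have hdec : ∀ x : L, ∃ y ∈ M j, ∃ a ∈ A (j + 1), y + a = x := by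
        intro x
        have hx : x ∈ M j ⊔ A (j + 1) := by rw [hMNtop]; exact LieSubalgebra.mem_top x
        exact Stmt12.mem_sup_of_ideal hNid hx
      have hDdec : ∀ x ∈ D (j + 1), ∃ y ∈ D j, ∃ a ∈ A (j + 1), y + a = x := by
        intro x hx
        obtain ⟨y, hyM, a, haN, hyx⟩ := hdec x
        have hy1 : y ∈ D (j + 1) := by
          have hxy : y = x - a := by rw [← hyx]; abel
          rw [hxy]
          exact sub_mem hx (hND haN)
        refine ⟨y, ?_, a, haN, hyx⟩
        rw [hDj, LieSubalgebra.mem_inf]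
        exact ⟨hy1, hyM⟩
      intro S hS
      have hD1S : D (j + 1) ≤ S ⊔ A (j + 1) := by
        intro x hx
        obtain ⟨y, hy, a, ha, hyx⟩ := hDdec x hx
        rw [← hyx]
        exact add_mem (hsupl S (A (j + 1)) (hS hy)) (hsupr S (A (j + 1)) ha)
      obtain ⟨T', hT'B, hT'inf, hT'sup⟩ := hIH (S ⊔ A (j + 1)) hD1S
      have hNT' : A (j + 1) ≤ T' := hND.trans hT'B
      have hDT₀ : D j ≤ T' ⊓ M j := le_inf ((hDmono j).trans hT'B) (hDle j j hjI le_rfl)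
      have hSinfT₀ : S ⊓ (T' ⊓ M j) = D j := by
        refine le_antisymm ?_ (le_inf hS hDT₀)
        intro x hx
        rw [LieSubalgebra.mem_inf, LieSubalgebra.mem_inf] at hx
        have hx1 : x ∈ D (j + 1) := by
          rw [← hT'inf, LieSubalgebra.mem_inf]
          exact ⟨hsupl S (A (j + 1)) hx.1, hx.2.1⟩
        rw [hDj, LieSubalgebra.mem_inf]
        exact ⟨hx1, hx.2.2⟩
      have hST'top : S ⊔ T' = ⊤ := by
        rw [eq_top_iff, ← hT'sup]
        exact sup_le (sup_le le_sup_left (hNT'.trans le_sup_right)) le_sup_right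
      have hRtop : (S ⊔ T' ⊓ M j) ⊔ A (j + 1) = ⊤ := by
        rw [eq_top_iff, ← hST'top]
        refine sup_le (le_sup_left.trans le_sup_left) ?_
        intro x hx
        obtain ⟨y, hyM, a, haN, hyx⟩ := hdec x
        have hy1 : y ∈ T' := by
          have hxy : y = x - a := by rw [← hyx]; abel
          rw [hxy]
          exact sub_mem hx (hNT' haN)
        rw [← hyx]
        refine add_mem (hsupl (S ⊔ T' ⊓ M j) (A (j + 1)) ?_) (hsupr (S ⊔ T' ⊓ M j) (A (j + 1)) haN)
        exact hsupr S (T' ⊓ M j) ((LieSubalgebra.mem_inf _ _ _).mpr ⟨hy1, hyM⟩)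
      have hKR : A j ≤ S ⊔ T' ⊓ M j := hKD.trans (hS.trans le_sup_left)
      have hRdec : ∀ x : L, ∃ y ∈ S ⊔ T' ⊓ M j, ∃ a ∈ A (j + 1), y + a = x := by
        intro x
        have hx : x ∈ (S ⊔ T' ⊓ M j) ⊔ A (j + 1) := by rw [hRtop]; exact LieSubalgebra.mem_top x
        exact Stmt12.mem_sup_of_ideal hNid hx
      have hCid : Paper.IsIdealSubalg ((S ⊔ T' ⊓ M j) ⊓ A (j + 1)) := by
        intro x c hc
        rw [LieSubalgebra.mem_inf] at hc
        obtain ⟨r, hr, a, ha, rfl⟩ := hRdec x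
        have h1 : ⁅r, c⁆ ∈ (S ⊔ T' ⊓ M j) ⊓ A (j + 1) := by
          rw [LieSubalgebra.mem_inf]
          exact ⟨(S ⊔ T' ⊓ M j).lie_mem hr hc.1, hNid r c hc.2⟩
        have h2 : ⁅a, c⁆ ∈ (S ⊔ T' ⊓ M j) ⊓ A (j + 1) := by
          rw [LieSubalgebra.mem_inf]
          exact ⟨hKR (habN a ha c hc.2), hKN (habN a ha c hc.2)⟩
        have hexp : ⁅r + a, c⁆ = ⁅r, c⁆ + ⁅a, c⁆ := add_lie r a c
        rw [hexp]
        exact add_mem h1 h2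
      rcases (hA.2.2.2 j hjn).2 _ hCid (le_inf hKR hKN) inf_le_right with hCK | hCN
      · -- the complement is T'
        refine ⟨T', (hDmono j).trans hT'B, ?_, hST'top⟩
        refine le_antisymm ?_ (le_inf hS ((hDmono j).trans hT'B))
        intro x hx
        rw [LieSubalgebra.mem_inf] at hx
        have hx1 : x ∈ D (j + 1) := by
          rw [← hT'inf, LieSubalgebra.mem_inf]
          exact ⟨hsupl S (A (j + 1)) hx.1, hx.2⟩
        obtain ⟨y, hy, a, ha, hyx⟩ := hDdec x hx1
        have haS : a ∈ S := by
          have hxy : a = x - y := by rw [← hyx]; abel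
          rw [hxy]
          exact sub_mem hx.1 (hS hy)
        have haK : a ∈ A j := by
          have hmem : a ∈ (S ⊔ T' ⊓ M j) ⊓ A (j + 1) := by
            rw [LieSubalgebra.mem_inf]
            exact ⟨hsupl S (T' ⊓ M j) haS, ha⟩
          rw [hCK] at hmem
          exact hmem
        rw [← hyx]
        exact add_mem hy (hKD haK)
      · -- the complement is T' ⊓ M j
        refine ⟨T' ⊓ M j, hDT₀, hSinfT₀, ?_⟩
        rw [eq_top_iff, ← hRtop]
        exact sup_le le_rfl (hCN ▸ inf_le_left)
  have hkey := key n 0 (by omega)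
  have hD0 : D 0 = B := by
    rw [hBdef]
    have hset : {i | i ∈ I ∧ 0 ≤ i} = I := by ext i; simp
    show (⨅ i ∈ {i | i ∈ I ∧ 0 ≤ i}, M i) = ⨅ i ∈ I, M i
    rw [hset]
  rwa [hD0] at hkey
end

section
/- Let L be a solvable Lie algebra and U a subalgebra. Then Ω(U,L)_min = Π(U,L); that is, the minimal elements of Ω(U,L) are exactly the U-prefrattini subalgebras of L. In particular, the set of U-prefrattini subalgebras does not depend on the choice of chief series. -/
open LieAlgebra

namespace StmtAux

open Paper

variable {F : Type*} [Field F] {L : Type*} [LieRing L] [LieAlgebra F L]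

/-- If `N` is an ideal, the subalgebra `P ⊔ N` has underlying submodule the submodule sum. -/
theorem ideal_sup_toSubmodule {P N : LieSubalgebra F L} (hN : IsIdealSubalg N) :
    ((P ⊔ N : LieSubalgebra F L) : Submodule F L) = (P : Submodule F L) ⊔ (N : Submodule F L) := by
  have hlie : ∀ {x y : L}, x ∈ ((P : Submodule F L) ⊔ (N : Submodule F L) : Submodule F L) →
      y ∈ ((P : Submodule F L) ⊔ (N : Submodule F L) : Submodule F L) →
      ⁅x, y⁆ ∈ ((P : Submodule F L) ⊔ (N : Submodule F L) : Submodule F L) := by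
    intro x y hx hy
    obtain ⟨p, hp, a, ha, rfl⟩ := Submodule.mem_sup.1 hx
    obtain ⟨q, hq, b, hb, rfl⟩ := Submodule.mem_sup.1 hy
    rw [LieSubalgebra.mem_toSubmodule] at hp hq ha hb
    have h1 : ⁅p, q⁆ ∈ P := P.lie_mem hp hq
    have h2 : ⁅p, b⁆ ∈ N := hN p b hb
    have h3 : ⁅a, q + b⁆ ∈ N := by
      have hmm := hN (q + b) a ha
      have hneg : ⁅a, q + b⁆ = -⁅q + b, a⁆ := (lie_skew _ _).symm
      rw [hneg]; exact neg_mem hmm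
    have h23 : ⁅p, b⁆ + ⁅a, q + b⁆ ∈ N := N.add_mem h2 h3
    have hexp : ⁅p + a, q + b⁆ = ⁅p, q⁆ + (⁅p, b⁆ + ⁅a, q + b⁆) := by
      rw [add_lie, lie_add]; abel
    rw [hexp]
    refine Submodule.add_mem _ (Submodule.mem_sup_left ?_) (Submodule.mem_sup_right ?_)
    · rwa [LieSubalgebra.mem_toSubmodule]
    · rwa [LieSubalgebra.mem_toSubmodule]
  let K : LieSubalgebra F L :=
    { toSubmodule := (P : Submodule F L) ⊔ (N : Submodule F L)
      lie_mem' := fun hx hy => hlie hx hy }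
  have hPK : P ≤ K := fun x hx => show x ∈ K from Submodule.mem_sup_left
    ((LieSubalgebra.mem_toSubmodule _).2 hx)
  have hNK : N ≤ K := fun x hx => show x ∈ K from Submodule.mem_sup_right
    ((LieSubalgebra.mem_toSubmodule _).2 hx)
  apply le_antisymm
  · exact (LieSubalgebra.toSubmodule_le_toSubmodule (P ⊔ N) K).2
      (sup_le hPK hNK)
  · exact sup_le ((LieSubalgebra.toSubmodule_le_toSubmodule _ _).2 le_sup_left)
      ((LieSubalgebra.toSubmodule_le_toSubmodule _ _).2 le_sup_right)

theorem mem_sup_ideal {P N : LieSubalgebra F L} (hN : IsIdealSubalg N) {x : L} :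
    x ∈ P ⊔ N ↔ ∃ p ∈ P, ∃ a ∈ N, p + a = x := by
  rw [← LieSubalgebra.mem_toSubmodule, ideal_sup_toSubmodule hN, Submodule.mem_sup]
  simp [LieSubalgebra.mem_toSubmodule]

/-- Dedekind modular law, ideal in first position: `(N ⊔ B) ⊓ C = N ⊔ (B ⊓ C)` if `N ≤ C`. -/
theorem modular₁ {N B C : LieSubalgebra F L} (hN : IsIdealSubalg N) (hNC : N ≤ C) :
    (N ⊔ B) ⊓ C = N ⊔ (B ⊓ C) := by
  apply le_antisymm
  · intro x hx
    obtain ⟨hx1, hx2⟩ := (LieSubalgebra.mem_inf _ _ _).1 hx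
    rw [sup_comm] at hx1
    obtain ⟨p, hp, a, ha, rfl⟩ := (mem_sup_ideal hN).1 hx1
    have hpC : p ∈ C := by
      have heq : p = (p + a) - a := by abel
      rw [heq]; exact sub_mem hx2 (hNC ha)
    have hmem : p ∈ B ⊓ C := (LieSubalgebra.mem_inf _ _ _).mpr ⟨hp, hpC⟩
    rw [sup_comm]
    exact (mem_sup_ideal hN).2 ⟨p, hmem, a, ha, rfl⟩
  · exact le_inf (sup_le le_sup_left (inf_le_left.trans le_sup_right))
      (sup_le hNC inf_le_right)

/-- Dedekind modular law, ideal in middle position: `(P ⊔ N) ⊓ Q = P ⊔ (N ⊓ Q)` if `P ≤ Q`. -/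
theorem modular₂ {N P Q : LieSubalgebra F L} (hN : IsIdealSubalg N) (hPQ : P ≤ Q) :
    (P ⊔ N) ⊓ Q = P ⊔ (N ⊓ Q) := by
  apply le_antisymm
  · intro x hx
    obtain ⟨hx1, hx2⟩ := (LieSubalgebra.mem_inf _ _ _).1 hx
    obtain ⟨p, hp, a, ha, rfl⟩ := (mem_sup_ideal hN).1 hx1
    have haQ : a ∈ Q := by
      have heq : a = (p + a) - p := by abel
      rw [heq]; exact sub_mem hx2 (hPQ hp)
    have hmem : a ∈ N ⊓ Q := (LieSubalgebra.mem_inf _ _ _).mpr ⟨ha, haQ⟩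
    exact add_mem ((le_sup_left : P ≤ P ⊔ (N ⊓ Q)) hp)
      ((le_sup_right : N ⊓ Q ≤ P ⊔ (N ⊓ Q)) hmem)
  · exact le_inf (sup_le le_sup_left (inf_le_left.trans le_sup_right))
      (sup_le hPQ inf_le_right)

/-- If `R` is invariant under `P` and `Q` and `P ⊔ Q = ⊤` then `R` is an ideal. -/
theorem isIdeal_of_sup_eq_top {R P Q : LieSubalgebra F L}
    (hP : ∀ x ∈ P, ∀ r ∈ R, ⁅x, r⁆ ∈ R) (hQ : ∀ x ∈ Q, ∀ r ∈ R, ⁅x, r⁆ ∈ R)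
    (h : P ⊔ Q = ⊤) : IsIdealSubalg R := by
  have h1 : P ≤ R.normalizer := fun x hx =>
    (LieSubalgebra.mem_normalizer_iff R x).2 fun y hy => hP x hx y hy
  have h2 : Q ≤ R.normalizer := fun x hx =>
    (LieSubalgebra.mem_normalizer_iff R x).2 fun y hy => hQ x hx y hy
  have htop : (⊤ : LieSubalgebra F L) ≤ R.normalizer := h ▸ sup_le h1 h2
  intro x a ha
  exact (LieSubalgebra.mem_normalizer_iff R x).1 (htop (LieSubalgebra.mem_top x)) a ha

theorem chief_mono {A : ℕ → LieSubalgebra F L} {n : ℕ} (hA : IsChiefSeries A n)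
    {i j : ℕ} (hij : i ≤ j) (hjn : j ≤ n) : A i ≤ A j := by
  induction j, hij using Nat.le_induction with
  | base => exact le_rfl
  | succ j hij ih =>
    exact (ih (by omega)).trans ((hA.2.2.2 j (by omega)).1.le)

/-- Chief factors of a solvable Lie algebra are abelian. -/
theorem chief_factor_abelian [LieAlgebra.IsSolvable L]
    {A : ℕ → LieSubalgebra F L} {n : ℕ} (hA : IsChiefSeries A n)
    {k : ℕ} (hk : k < n) {x y : L} (hx : x ∈ A (k + 1)) (hy : y ∈ A (k + 1)) :
    ⁅x, y⁆ ∈ A k := by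
  classical
  set W : Submodule F L :=
    Submodule.span F {z | ∃ u ∈ A (k + 1), ∃ v ∈ A (k + 1), ⁅u, v⁆ = z} with hW
  -- W is invariant under every `ad x`
  have hWinv : ∀ t : L, W ≤ W.comap ((LieAlgebra.ad F L t : Module.End F L) : L →ₗ[F] L) := by
    intro t
    rw [hW, Submodule.span_le]
    rintro z ⟨u, hu, v, hv, rfl⟩
    simp only [Submodule.mem_comap, LinearMap.coe_coe, SetLike.mem_coe]
    have had : (LieAlgebra.ad F L t : Module.End F L) ⁅u, v⁆ = ⁅t, ⁅u, v⁆⁆ := rfl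
    rw [had, leibniz_lie]
    refine Submodule.add_mem _ ?_ ?_
    · exact Submodule.subset_span ⟨⁅t, u⁆, hA.2.2.1 (k + 1) t u hu, v, hv, rfl⟩
    · exact Submodule.subset_span ⟨u, hu, ⁅t, v⁆, hA.2.2.1 (k + 1) t v hv, rfl⟩
  set Csub : Submodule F L := (A k : Submodule F L) ⊔ W with hCsub
  have hCinv : ∀ t : L, ∀ c ∈ Csub, ⁅t, c⁆ ∈ Csub := by
    intro t c hc
    obtain ⟨a, ha, w, hw, rfl⟩ := Submodule.mem_sup.1 hc
    rw [lie_add]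
    refine Submodule.add_mem _ (Submodule.mem_sup_left ?_) (Submodule.mem_sup_right ?_)
    · rw [LieSubalgebra.mem_toSubmodule] at ha ⊢
      exact hA.2.2.1 k t a ha
    · exact hWinv t hw
  let C : LieSubalgebra F L := { toSubmodule := Csub, lie_mem' := fun hx hy => hCinv _ _ hy }
  have hCideal : IsIdealSubalg C := fun t a ha => hCinv t a ha
  have hAkC : A k ≤ C := fun z hz =>
    show z ∈ Csub from Submodule.mem_sup_left ((LieSubalgebra.mem_toSubmodule _).2 hz)
  have hCA1 : C ≤ A (k + 1) := by
    intro z hz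
    have hz' : z ∈ Csub := hz
    rw [← LieSubalgebra.mem_toSubmodule]
    refine (sup_le ?_ ?_ : Csub ≤ (A (k + 1) : Submodule F L)) hz'
    · exact (LieSubalgebra.toSubmodule_le_toSubmodule _ _).2
        (chief_mono hA (Nat.le_succ k) hk)
    · rw [hW, Submodule.span_le]
      rintro z ⟨u, hu, v, hv, rfl⟩
      exact (LieSubalgebra.mem_toSubmodule _).2 ((A (k + 1)).lie_mem hu hv)
  have hbr : ⁅x, y⁆ ∈ W := Submodule.subset_span ⟨x, hx, y, hy, rfl⟩
  rcases (hA.2.2.2 k hk).2 C hCideal hAkC hCA1 with hC | hC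
  · rw [← hC]
    exact show ⁅x, y⁆ ∈ Csub from Submodule.mem_sup_right hbr
  · -- impossible: would contradict solvability
    exfalso
    have hCs : (A (k + 1) : Submodule F L) = Csub := by rw [← hC]
    have key : ∀ j : ℕ, (A (k + 1) : Submodule F L) ≤
        (A k : Submodule F L) ⊔ (LieAlgebra.derivedSeries F L j).toSubmodule := by
      intro j
      induction j with
      | zero =>
        have : (LieAlgebra.derivedSeries F L 0).toSubmodule = (⊤ : Submodule F L) := rfl
        rw [this, sup_top_eq]; exact le_top
      | succ j ih =>
        rw [hCs, hCsub]
        refine sup_le le_sup_left ?_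
        rw [hW, Submodule.span_le]
        rintro z ⟨u, hu, v, hv, rfl⟩
        have hu' := ih ((LieSubalgebra.mem_toSubmodule _).2 hu)
        have hv' := ih ((LieSubalgebra.mem_toSubmodule _).2 hv)
        obtain ⟨a, ha, d, hd, rfl⟩ := Submodule.mem_sup.1 hu'
        obtain ⟨a', ha', d', hd', rfl⟩ := Submodule.mem_sup.1 hv'
        rw [LieSubalgebra.mem_toSubmodule] at ha ha'
        rw [LieSubmodule.mem_toSubmodule] at hd hd'
        have hexp : ⁅a + d, a' + d'⁆ = (⁅a, a'⁆ + ⁅a, d'⁆ + ⁅d, a'⁆) + ⁅d, d'⁆ := by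
          rw [add_lie, lie_add, lie_add]; abel
        simp only [SetLike.mem_coe]
        rw [hexp]
        refine Submodule.add_mem _ (Submodule.mem_sup_left ?_) (Submodule.mem_sup_right ?_)
        · have m1 : ⁅a, a'⁆ ∈ A k := hA.2.2.1 k a a' ha'
          have m2 : ⁅a, d'⁆ ∈ A k := by
            have := hA.2.2.1 k d' a ha
            have hneg : ⁅a, d'⁆ = -⁅d', a⁆ := (lie_skew _ _).symm
            rw [hneg]; exact neg_mem this
          have m3 : ⁅d, a'⁆ ∈ A k := hA.2.2.1 k d a' ha'
          rw [LieSubalgebra.mem_toSubmodule]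
          exact add_mem (add_mem m1 m2) m3
        · have hmem : ⁅d, d'⁆ ∈ (LieAlgebra.derivedSeries F L (j + 1) : LieIdeal F L) := by
            rw [LieAlgebra.derivedSeries_def, LieAlgebra.derivedSeriesOfIdeal_succ]
            exact LieSubmodule.lie_mem_lie hd hd'
          rwa [LieSubmodule.mem_toSubmodule]
    obtain ⟨m, hm⟩ := LieAlgebra.IsSolvable.solvable (R := F) (L := L)
    have hfin := key m
    rw [hm] at hfin
    have hbot : (⊥ : LieIdeal F L).toSubmodule = (⊥ : Submodule F L) := rfl
    rw [hbot, sup_bot_eq] at hfin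
    have hle : A (k + 1) ≤ A k := (LieSubalgebra.toSubmodule_le_toSubmodule _ _).1 hfin
    exact (hA.2.2.2 k hk).1.not_ge hle

/-- A maximal subalgebra not containing a chief factor complements it. -/
theorem maximal_complements [LieAlgebra.IsSolvable L]
    {A : ℕ → LieSubalgebra F L} {n : ℕ} (hA : IsChiefSeries A n)
    {k : ℕ} (hk : k < n) {M : LieSubalgebra F L} (hM : IsCoatom M)
    (hAk : A k ≤ M) (hA1 : ¬ A (k + 1) ≤ M) :
    M ⊓ A (k + 1) = A k ∧ M ⊔ A (k + 1) = ⊤ := by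
  have hsup : M ⊔ A (k + 1) = ⊤ := by
    exact hM.2 _ (lt_of_le_of_ne le_sup_left fun h => hA1 (by rw [h]; exact le_sup_right))
  refine ⟨?_, hsup⟩
  have hRideal : IsIdealSubalg (M ⊓ A (k + 1)) := by
    refine isIdeal_of_sup_eq_top (P := M) (Q := A (k + 1)) ?_ ?_ hsup
    · intro t ht r hr
      obtain ⟨hr1, hr2⟩ := (LieSubalgebra.mem_inf _ _ _).1 hr
      exact (LieSubalgebra.mem_inf _ _ _).2 ⟨M.lie_mem ht hr1, hA.2.2.1 (k + 1) t r hr2⟩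
    · intro t ht r hr
      obtain ⟨hr1, hr2⟩ := (LieSubalgebra.mem_inf _ _ _).1 hr
      have hm : ⁅t, r⁆ ∈ A k := chief_factor_abelian hA hk ht hr2
      exact (LieSubalgebra.mem_inf _ _ _).2
        ⟨hAk hm, chief_mono hA (Nat.le_succ k) hk hm⟩
  rcases (hA.2.2.2 k hk).2 _ hRideal
      (le_inf hAk (chief_mono hA (Nat.le_succ k) hk)) inf_le_right with h | h
  · exact h
  · exact absurd (h ▸ inf_le_left : A (k + 1) ≤ M) hA1

/-- For a non-Frattini chief factor there is a witnessing maximal subalgebra. -/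
theorem exists_maximal_nonfrattini {U : LieSubalgebra F L} {A : ℕ → LieSubalgebra F L} {k : ℕ}
    (h : ¬ IsUFrattiniFactor U (A k) (A (k + 1))) :
    ∃ M : LieSubalgebra F L, IsCoatom M ∧ U ⊔ A k ≤ M ∧ ¬ A (k + 1) ≤ M := by
  rw [IsUFrattiniFactor, not_or] at h
  obtain ⟨h1, _⟩ := h
  by_contra hcon
  push_neg at hcon
  refine h1 (le_sInf ?_)
  rintro M ⟨hco, hle⟩
  exact hcon M hco hle

/-- The partial intersections `X k = ⋂ i ∈ I, i ≥ k, M i`. -/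
noncomputable def Xc (I : Set ℕ) (M : ℕ → LieSubalgebra F L) (k : ℕ) : LieSubalgebra F L :=
  ⨅ i ∈ {j | j ∈ I ∧ k ≤ j}, M i

theorem Xc_zero (I : Set ℕ) (M : ℕ → LieSubalgebra F L) :
    Xc I M 0 = ⨅ i ∈ I, M i := by
  unfold Xc
  congr 1
  ext i
  simp

theorem Xc_top {I : Set ℕ} {n : ℕ} (hI : ∀ i ∈ I, i < n) (M : ℕ → LieSubalgebra F L)
    {k : ℕ} (hk : n ≤ k) : Xc I M k = ⊤ := by
  exact le_antisymm le_top (le_iInf₂ fun i hi => absurd (hI i hi.1) (not_lt.2 (hk.trans hi.2)))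

theorem Xc_of_mem {I : Set ℕ} {k : ℕ} (hk : k ∈ I) (M : ℕ → LieSubalgebra F L) :
    Xc I M k = M k ⊓ Xc I M (k + 1) := by
  unfold Xc
  have hset : {j | j ∈ I ∧ k ≤ j} = insert k {j | j ∈ I ∧ k + 1 ≤ j} := by
    ext j
    simp only [Set.mem_setOf_eq, Set.mem_insert_iff]
    constructor
    · rintro ⟨hj, hkj⟩
      rcases eq_or_lt_of_le hkj with h | h
      · exact Or.inl h.symm
      · exact Or.inr ⟨hj, h⟩
    · rintro (rfl | ⟨hj, hkj⟩)
      · exact ⟨hk, le_rfl⟩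
      · exact ⟨hj, by omega⟩
  rw [hset, iInf_insert]

theorem Xc_of_not_mem {I : Set ℕ} {k : ℕ} (hk : k ∉ I) (M : ℕ → LieSubalgebra F L) :
    Xc I M k = Xc I M (k + 1) := by
  unfold Xc
  have hset : {j | j ∈ I ∧ k ≤ j} = {j | j ∈ I ∧ k + 1 ≤ j} := by
    ext j
    simp only [Set.mem_setOf_eq]
    constructor
    · rintro ⟨hj, hkj⟩
      refine ⟨hj, ?_⟩
      rcases eq_or_lt_of_le hkj with h | h
      · exact absurd (h ▸ hj) hk
      · omega
    · rintro ⟨hj, hkj⟩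
      exact ⟨hj, by omega⟩
  rw [hset]

theorem Xc_congr {I : Set ℕ} {M M' : ℕ → LieSubalgebra F L} {k : ℕ}
    (h : ∀ i ∈ I, k ≤ i → M i = M' i) : Xc I M k = Xc I M' k := by
  unfold Xc
  refine le_antisymm (le_iInf₂ fun i hi => (iInf₂_le i hi).trans_eq (h i hi.1 hi.2))
    (le_iInf₂ fun i hi => (iInf₂_le i hi).trans_eq (h i hi.1 hi.2).symm)

theorem le_Xc {I : Set ℕ} {M : ℕ → LieSubalgebra F L} {k : ℕ} {K : LieSubalgebra F L}
    (h : ∀ i ∈ I, k ≤ i → K ≤ M i) : K ≤ Xc I M k :=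
  le_iInf₂ fun i hi => h i hi.1 hi.2

theorem Xc_le {I : Set ℕ} {M : ℕ → LieSubalgebra F L} {k i : ℕ} (hi : i ∈ I) (hk : k ≤ i) :
    Xc I M k ≤ M i :=
  iInf₂_le i ⟨hi, hk⟩

theorem A_le_Xc {A : ℕ → LieSubalgebra F L} {n : ℕ} (hA : IsChiefSeries A n)
    {I : Set ℕ} (hI : ∀ i ∈ I, i < n) {U : LieSubalgebra F L} {M : ℕ → LieSubalgebra F L}
    (hM : ∀ i ∈ I, U ⊔ A i ≤ M i) (k : ℕ) : A k ≤ Xc I M k :=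
  le_Xc fun i hi hk =>
    (chief_mono hA hk (le_of_lt (hI i hi))).trans (le_sup_right.trans (hM i hi))

theorem U_le_Xc {A : ℕ → LieSubalgebra F L}
    {I : Set ℕ} {U : LieSubalgebra F L} {M : ℕ → LieSubalgebra F L}
    (hM : ∀ i ∈ I, U ⊔ A i ≤ M i) (k : ℕ) : U ≤ Xc I M k :=
  le_Xc fun i hi _ => le_sup_left.trans (hM i hi)

/-- Dimension bookkeeping for cutting with a maximal subalgebra complementing a chief factor. -/
theorem finrank_inf_exchange [FiniteDimensional F L] {Mk X Ak A1 : LieSubalgebra F L}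
    (hideal : IsIdealSubalg A1) (hsupA : Mk ⊔ A1 = ⊤) (hinfA : Mk ⊓ A1 = Ak) (hAX : A1 ≤ X) :
    Module.finrank F (Mk ⊓ X).toSubmodule + Module.finrank F A1.toSubmodule
      = Module.finrank F X.toSubmodule + Module.finrank F Ak.toSubmodule := by
  have hsub : Mk.toSubmodule ⊔ A1.toSubmodule = ⊤ := by
    rw [← ideal_sup_toSubmodule hideal, hsupA, LieSubalgebra.top_toSubmodule]
  have h1 : Mk.toSubmodule ⊔ X.toSubmodule = ⊤ := by
    rw [eq_top_iff, ← hsub]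
    exact sup_le_sup_left ((LieSubalgebra.toSubmodule_le_toSubmodule _ _).2 hAX) _
  have e1 := Submodule.finrank_sup_add_finrank_inf_eq Mk.toSubmodule X.toSubmodule
  have e2 := Submodule.finrank_sup_add_finrank_inf_eq Mk.toSubmodule A1.toSubmodule
  rw [h1, finrank_top] at e1
  rw [hsub, finrank_top] at e2
  have hinf1 : Mk.toSubmodule ⊓ X.toSubmodule = (Mk ⊓ X).toSubmodule :=
    (LieSubalgebra.inf_toSubmodule _ _).symm
  have hinf2 : Mk.toSubmodule ⊓ A1.toSubmodule = Ak.toSubmodule := by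
    rw [← LieSubalgebra.inf_toSubmodule, hinfA]
  rw [hinf1] at e1
  rw [hinf2] at e2
  omega

open scoped Classical in
theorem Xc_finrank [FiniteDimensional F L] [LieAlgebra.IsSolvable L]
    {A : ℕ → LieSubalgebra F L} {n : ℕ} (hA : IsChiefSeries A n)
    {I : Set ℕ} (hI : ∀ i ∈ I, i < n) {U : LieSubalgebra F L} {M : ℕ → LieSubalgebra F L}
    (hM : ∀ i ∈ I, IsCoatom (M i) ∧ U ⊔ A i ≤ M i ∧ ¬ A (i + 1) ≤ M i) :
    ∀ d k, k + d = n →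
      Module.finrank F (Xc I M k).toSubmodule
          + ∑ i ∈ Finset.Ico k n, (if i ∈ I then Module.finrank F (A (i + 1)).toSubmodule else 0)
        = Module.finrank F L
          + ∑ i ∈ Finset.Ico k n, (if i ∈ I then Module.finrank F (A i).toSubmodule else 0) := by
  intro d
  induction d with
  | zero =>
    intro k hk
    have hnk : n ≤ k := by omega
    rw [Xc_top hI M hnk, Finset.Ico_eq_empty (by omega), Finset.sum_empty, Finset.sum_empty,
      LieSubalgebra.top_toSubmodule, finrank_top]
  | succ d ih =>
    intro k hk
    have hkn : k < n := by omega
    rw [Finset.sum_eq_sum_Ico_succ_bot hkn, Finset.sum_eq_sum_Ico_succ_bot hkn]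
    have ihk := ih (k + 1) (by omega)
    by_cases hkI : k ∈ I
    · rw [if_pos hkI, if_pos hkI, Xc_of_mem hkI M]
      obtain ⟨hco, hle, hnle⟩ := hM k hkI
      have hAkM : A k ≤ M k := le_sup_right.trans hle
      obtain ⟨hinfA, hsupA⟩ := maximal_complements hA (hI k hkI) hco hAkM hnle
      have hAX : A (k + 1) ≤ Xc I M (k + 1) :=
        A_le_Xc hA hI (fun i hi => (hM i hi).2.1) (k + 1)
      have hex := finrank_inf_exchange (hA.2.2.1 (k + 1)) hsupA hinfA hAX
      omega
    · rw [if_neg hkI, if_neg hkI, Xc_of_not_mem hkI M]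
      omega

/-- Core of Lemma 1: complements exist above every `X k`. -/
theorem Xc_complemented [FiniteDimensional F L] [LieAlgebra.IsSolvable L]
    {A : ℕ → LieSubalgebra F L} {n : ℕ} (hA : IsChiefSeries A n)
    {I : Set ℕ} (hI : ∀ i ∈ I, i < n) {U : LieSubalgebra F L} {M : ℕ → LieSubalgebra F L}
    (hM : ∀ i ∈ I, IsCoatom (M i) ∧ U ⊔ A i ≤ M i ∧ ¬ A (i + 1) ≤ M i) :
    ∀ d k, n ≤ k + d → ∀ S, Xc I M k ≤ S →
      ∃ T, Xc I M k ≤ T ∧ S ⊓ T = Xc I M k ∧ S ⊔ T = ⊤ := by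
  have base : ∀ k, n ≤ k → ∀ S, Xc I M k ≤ S →
      ∃ T, Xc I M k ≤ T ∧ S ⊓ T = Xc I M k ∧ S ⊔ T = ⊤ := by
    intro k hk S hS
    have hX : Xc I M k = ⊤ := Xc_top hI M hk
    have hS' : S = ⊤ := top_le_iff.1 (hX ▸ hS)
    exact ⟨⊤, le_top, by rw [hS', hX, top_inf_eq], by rw [hS', top_sup_eq]⟩
  intro d
  induction d with
  | zero => intro k hk; exact base k (by omega)
  | succ d ih =>
    intro k hk S hS
    rcases Nat.lt_or_ge k n with hkn' | hkn'
    swap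
    · exact base k hkn' S hS
    by_cases hkI : k ∈ I
    swap
    · rw [Xc_of_not_mem hkI M] at hS ⊢
      exact ih (k + 1) (by omega) S hS
    obtain ⟨hco, hUle, hnle⟩ := hM k hkI
    have hAkM : A k ≤ M k := le_sup_right.trans hUle
    obtain ⟨hinfA, hsupA⟩ := maximal_complements hA hkn' hco hAkM hnle
    have hXk : Xc I M k = M k ⊓ Xc I M (k + 1) := Xc_of_mem hkI M
    have hA1X : A (k + 1) ≤ Xc I M (k + 1) := A_le_Xc hA hI (fun i hi => (hM i hi).2.1) (k + 1)
    have hidl : IsIdealSubalg (A (k + 1)) := hA.2.2.1 (k + 1)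
    have hXsup : Xc I M k ⊔ A (k + 1) = Xc I M (k + 1) := by
      calc Xc I M k ⊔ A (k + 1) = A (k + 1) ⊔ (M k ⊓ Xc I M (k + 1)) := by
            rw [hXk, sup_comm]
        _ = (A (k + 1) ⊔ M k) ⊓ Xc I M (k + 1) := (modular₁ hidl hA1X).symm
        _ = ⊤ ⊓ Xc I M (k + 1) := by rw [sup_comm, hsupA]
        _ = Xc I M (k + 1) := top_inf_eq _
    obtain ⟨T', hXT', hinfT', hsupT'⟩ := ih (k + 1) (by omega) (S ⊔ A (k + 1))
      (by rw [← hXsup]; exact sup_le_sup_right hS _)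
    have hAT' : A (k + 1) ≤ T' := hA1X.trans hXT'
    have hXkMk : Xc I M k ≤ M k := by rw [hXk]; exact inf_le_left
    have hXkX1 : Xc I M k ≤ Xc I M (k + 1) := by rw [hXk]; exact inf_le_right
    set T₁ := M k ⊓ T' with hT₁
    have hXT₁ : Xc I M k ≤ T₁ := le_inf hXkMk (hXkX1.trans hXT')
    have hST₁ : S ⊓ T₁ = Xc I M k := by
      apply le_antisymm
      · have h1 : S ⊓ T₁ ≤ (S ⊔ A (k + 1)) ⊓ T' := inf_le_inf le_sup_left inf_le_right
        have h2 : S ⊓ T₁ ≤ M k := inf_le_right.trans inf_le_left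
        rw [hXk]
        exact le_inf h2 (h1.trans hinfT'.le)
      · exact le_inf hS hXT₁
    have hT₁A : A (k + 1) ⊔ T₁ = T' := by
      calc A (k + 1) ⊔ (M k ⊓ T') = (A (k + 1) ⊔ M k) ⊓ T' := (modular₁ hidl hAT').symm
        _ = ⊤ ⊓ T' := by rw [sup_comm, hsupA]
        _ = T' := top_inf_eq _
    have hYA : (S ⊔ T₁) ⊔ A (k + 1) = ⊤ := by
      have h1 : (S ⊔ T₁) ⊔ A (k + 1) = S ⊔ (A (k + 1) ⊔ T₁) := by
        rw [sup_assoc, sup_comm T₁]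
      have h2 : S ⊔ T' = (S ⊔ A (k + 1)) ⊔ T' := by
        rw [sup_assoc, sup_eq_right.2 hAT']
      rw [h1, hT₁A, h2, hsupT']
    set R := (S ⊔ T₁) ⊓ A (k + 1) with hRdef
    have hAkXk : A k ≤ Xc I M k := A_le_Xc hA hI (fun i hi => (hM i hi).2.1) k
    have hAkR : A k ≤ R :=
      le_inf ((hAkXk.trans hS).trans le_sup_left) (chief_mono hA (Nat.le_succ k) hkn')
    have hRideal : IsIdealSubalg R := by
      refine isIdeal_of_sup_eq_top (P := S ⊔ T₁) (Q := A (k + 1)) ?_ ?_ hYA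
      · intro t ht r hr
        obtain ⟨hr1, hr2⟩ := (LieSubalgebra.mem_inf _ _ _).1 hr
        exact (LieSubalgebra.mem_inf _ _ _).2 ⟨(S ⊔ T₁).lie_mem ht hr1, hidl t r hr2⟩
      · intro t ht r hr
        obtain ⟨_, hr2⟩ := (LieSubalgebra.mem_inf _ _ _).1 hr
        exact hAkR (chief_factor_abelian hA hkn' ht hr2)
    rcases (hA.2.2.2 k hkn').2 R hRideal hAkR inf_le_right with hRA | hRA
    · -- R = A k : take T = T₁ ⊔ A (k+1)
      refine ⟨T₁ ⊔ A (k + 1), hXT₁.trans le_sup_left, ?_, ?_⟩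
      · apply le_antisymm
        · intro x hx
          obtain ⟨hxS, hxT⟩ := (LieSubalgebra.mem_inf _ _ _).1 hx
          obtain ⟨t, ht, a, ha, rfl⟩ := (mem_sup_ideal hidl).1 hxT
          have haY : a ∈ S ⊔ T₁ := by
            have hsub := sub_mem ((le_sup_left : S ≤ S ⊔ T₁) hxS)
              ((le_sup_right : T₁ ≤ S ⊔ T₁) ht)
            simpa using hsub
          have haR : a ∈ R := (LieSubalgebra.mem_inf _ _ _).2 ⟨haY, ha⟩
          have haT₁ : a ∈ T₁ := hXT₁ (hAkXk (hRA ▸ haR))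
          rw [← hST₁]
          exact (LieSubalgebra.mem_inf _ _ _).2 ⟨hxS, T₁.add_mem ht haT₁⟩
        · exact le_inf hS (hXT₁.trans le_sup_left)
      · rw [← sup_assoc, hYA]
    · -- R = A (k+1) : take T = T₁
      have hA1Y : A (k + 1) ≤ S ⊔ T₁ := hRA ▸ inf_le_left
      exact ⟨T₁, hXT₁, hST₁,
        ((sup_eq_left.2 hA1Y).symm : S ⊔ T₁ = (S ⊔ T₁) ⊔ A (k + 1)).trans hYA⟩

/-- Core of Lemma 2: each member of `Ω(U,L)` contains a prefrattini subalgebra. -/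
theorem omega_contains_pre_core [FiniteDimensional F L] [LieAlgebra.IsSolvable L]
    {A : ℕ → LieSubalgebra F L} {n : ℕ} (hA : IsChiefSeries A n) {U : LieSubalgebra F L}
    {I : Set ℕ} (hIdef : I = {i | i < n ∧ ¬ IsUFrattiniFactor U (A i) (A (i + 1))})
    {S : LieSubalgebra F L} (hUS : U ≤ S) (hcomp : IsComplementedInterval S) :
    ∀ d k, k + d = n → ∃ M : ℕ → LieSubalgebra F L,
      (∀ i ∈ I, k ≤ i → IsCoatom (M i) ∧ U ⊔ A i ≤ M i ∧ ¬ A (i + 1) ≤ M i) ∧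
      Xc I M k ≤ S ⊔ A k := by
  have hI : ∀ i ∈ I, i < n := by rw [hIdef]; exact fun i hi => hi.1
  intro d
  induction d with
  | zero =>
    intro k hk
    refine ⟨fun _ => ⊤, ?_, ?_⟩
    · intro i hi hki
      exact absurd (hI i hi) (by omega)
    · have : A k = ⊤ := by rw [show k = n by omega]; exact hA.2.1
      rw [this, sup_top_eq]
      exact le_top
  | succ d ih =>
    intro k hk
    have hkn : k < n := by omega
    obtain ⟨M', hM', hX'⟩ := ih (k + 1) (by omega)
    have hAkA1 : A k ≤ A (k + 1) := chief_mono hA (Nat.le_succ k) (by omega)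
    have hidl : IsIdealSubalg (A (k + 1)) := hA.2.2.1 (k + 1)
    have hidlk : IsIdealSubalg (A k) := hA.2.2.1 k
    by_cases hcov : A (k + 1) ≤ S ⊔ A k
    · -- the factor is covered by S ⊔ A k
      have hSA : S ⊔ A (k + 1) = S ⊔ A k :=
        le_antisymm (sup_le le_sup_left hcov) (sup_le_sup_left hAkA1 S)
      by_cases hkI : k ∈ I
      · have hkfrat : ¬ IsUFrattiniFactor U (A k) (A (k + 1)) := by
          rw [hIdef] at hkI; exact hkI.2
        obtain ⟨Mk, hco, hle, hnle⟩ := exists_maximal_nonfrattini hkfrat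
        refine ⟨Function.update M' k Mk, ?_, ?_⟩
        · intro i hi hki
          rcases eq_or_ne i k with rfl | hne
          · rw [Function.update_self]; exact ⟨hco, hle, hnle⟩
          · rw [Function.update_of_ne hne]
            exact hM' i hi (by omega)
        · have hXeq : Xc I (Function.update M' k Mk) (k + 1) = Xc I M' (k + 1) :=
            Xc_congr fun i hi hki => Function.update_of_ne (by omega) _ _
          rw [Xc_of_mem hkI, Function.update_self, hXeq]
          calc Mk ⊓ Xc I M' (k + 1) ≤ Xc I M' (k + 1) := inf_le_right
            _ ≤ S ⊔ A (k + 1) := hX'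
            _ = S ⊔ A k := hSA
      · refine ⟨M', ?_, ?_⟩
        · intro i hi hki
          have hne : i ≠ k := fun h => hkI (h ▸ hi)
          exact hM' i hi (by omega)
        · rw [Xc_of_not_mem hkI]
          exact hX'.trans (le_of_eq hSA)
    · -- the factor is not covered: build the maximal subalgebra D = C ⊔ A k
      obtain ⟨C, hSC, hCinf, hCsup⟩ := hcomp (S ⊔ A (k + 1)) le_sup_left
      set D := C ⊔ A k with hD
      have hDsup : D ⊔ A (k + 1) = ⊤ := by
        have h1 : D ⊔ A (k + 1) = C ⊔ A (k + 1) := by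
          rw [hD, sup_assoc, sup_eq_right.2 hAkA1]
        have h2 : (S ⊔ A (k + 1)) ⊔ C = C ⊔ A (k + 1) := by
          rw [sup_comm _ C, ← sup_assoc, sup_eq_left.2 hSC]
        rw [h1, ← h2, hCsup]
      have hDcapS : D ⊓ (S ⊔ A (k + 1)) = S ⊔ A k := by
        have hAkle : A k ≤ S ⊔ A (k + 1) := hAkA1.trans le_sup_right
        calc D ⊓ (S ⊔ A (k + 1)) = (A k ⊔ C) ⊓ (S ⊔ A (k + 1)) := by rw [hD, sup_comm]
          _ = A k ⊔ (C ⊓ (S ⊔ A (k + 1))) := modular₁ hidlk hAkle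
          _ = A k ⊔ S := by rw [inf_comm C (S ⊔ A (k + 1)), hCinf]
          _ = S ⊔ A k := sup_comm _ _
      have hAkD : A k ≤ D := le_sup_right
      have hDinf : D ⊓ A (k + 1) = A k := by
        have hE : IsIdealSubalg (D ⊓ A (k + 1)) := by
          refine isIdeal_of_sup_eq_top (P := D) (Q := A (k + 1)) ?_ ?_ hDsup
          · intro t ht r hr
            obtain ⟨hr1, hr2⟩ := (LieSubalgebra.mem_inf _ _ _).1 hr
            exact (LieSubalgebra.mem_inf _ _ _).2 ⟨D.lie_mem ht hr1, hidl t r hr2⟩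
          · intro t ht r hr
            obtain ⟨_, hr2⟩ := (LieSubalgebra.mem_inf _ _ _).1 hr
            exact (le_inf hAkD hAkA1) (chief_factor_abelian hA hkn ht hr2)
        rcases (hA.2.2.2 k hkn).2 _ hE (le_inf hAkD hAkA1) inf_le_right with h | h
        · exact h
        · exfalso
          have hA1D : A (k + 1) ≤ D := h ▸ inf_le_left
          exact hcov (by rw [← hDcapS]; exact le_inf hA1D le_sup_right)
      have hDne : D ≠ ⊤ := by
        intro h
        rw [h, top_inf_eq] at hDinf
        exact (hA.2.2.2 k hkn).1.ne' hDinf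
      have hDco : IsCoatom D := by
        refine ⟨hDne, fun W hDW => ?_⟩
        have hWsup : W ⊔ A (k + 1) = ⊤ := by
          have h1 : D ⊔ A (k + 1) ≤ W ⊔ A (k + 1) := sup_le_sup_right hDW.le _
          exact eq_top_iff.2 (hDsup ▸ h1)
        have hAkW : A k ≤ W := hAkD.trans hDW.le
        have hRid : IsIdealSubalg (W ⊓ A (k + 1)) := by
          refine isIdeal_of_sup_eq_top (P := W) (Q := A (k + 1)) ?_ ?_ hWsup
          · intro t ht r hr
            obtain ⟨hr1, hr2⟩ := (LieSubalgebra.mem_inf _ _ _).1 hr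
            exact (LieSubalgebra.mem_inf _ _ _).2 ⟨W.lie_mem ht hr1, hidl t r hr2⟩
          · intro t ht r hr
            obtain ⟨_, hr2⟩ := (LieSubalgebra.mem_inf _ _ _).1 hr
            exact (le_inf hAkW hAkA1) (chief_factor_abelian hA hkn ht hr2)
        rcases (hA.2.2.2 k hkn).2 _ hRid (le_inf hAkW hAkA1) inf_le_right with h | h
        · exfalso
          have hWD : W = D := by
            have h1 : W = W ⊓ (D ⊔ A (k + 1)) := by rw [hDsup, inf_top_eq]
            have h2 : W ⊓ (D ⊔ A (k + 1)) = D ⊔ (A (k + 1) ⊓ W) := by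
              rw [inf_comm]; exact modular₂ hidl hDW.le
            rw [h1, h2, inf_comm (A (k + 1)) W, h, sup_eq_left.2 hAkD]
          exact hDW.ne' hWD
        · have hle : A (k + 1) ≤ W := h ▸ inf_le_left
          have h2 : W ⊔ A (k + 1) ≤ W := sup_le le_rfl hle
          exact top_le_iff.1 (hWsup ▸ h2)
      have hDU : U ⊔ A k ≤ D := sup_le (hUS.trans (hSC.trans le_sup_left)) le_sup_right
      have hDnA : ¬ A (k + 1) ≤ D := by
        intro h
        exact hcov (by rw [← hDcapS]; exact le_inf h le_sup_right)
      have hkI : k ∈ I := by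
        rw [hIdef]
        refine ⟨hkn, fun hf => ?_⟩
        rcases hf with h1 | h2
        · exact hDnA (h1.trans (sInf_le ⟨hDco, hDU⟩))
        · exact hDne (top_le_iff.1 (h2 ▸ hDU))
      refine ⟨Function.update M' k D, ?_, ?_⟩
      · intro i hi hki
        rcases eq_or_ne i k with rfl | hne
        · rw [Function.update_self]; exact ⟨hDco, hDU, hDnA⟩
        · rw [Function.update_of_ne hne]
          exact hM' i hi (by omega)
      · have hXeq : Xc I (Function.update M' k D) (k + 1) = Xc I M' (k + 1) :=
          Xc_congr fun i hi hki => Function.update_of_ne (by omega) _ _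
        rw [Xc_of_mem hkI, Function.update_self, hXeq]
        calc D ⊓ Xc I M' (k + 1) ≤ D ⊓ (S ⊔ A (k + 1)) := inf_le_inf_left _ hX'
          _ = S ⊔ A k := hDcapS

section Assembly

variable [LieAlgebra.IsSolvable L] [FiniteDimensional F L]
variable {U : LieSubalgebra F L} {n : ℕ} {A : ℕ → LieSubalgebra F L}

/-- Every `U`-prefrattini subalgebra (w.r.t. the given series) lies in `Ω(U,L)`. -/
theorem pre_mem_Omega (hA : IsChiefSeries A n) {B : LieSubalgebra F L}
    (hB : IsPrefrattiniWrt U A n B) : B ∈ Omega U := by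
  obtain ⟨M, hM, hBeq⟩ := hB
  set I : Set ℕ := {i | i < n ∧ ¬ IsUFrattiniFactor U (A i) (A (i + 1))} with hIdef
  have hIlt : ∀ i ∈ I, i < n := fun i hi => hi.1
  have hMI : ∀ i ∈ I, IsCoatom (M i) ∧ U ⊔ A i ≤ M i ∧ ¬ A (i + 1) ≤ M i :=
    fun i hi => hM i hi.1 hi.2
  have hBX : B = Xc I M 0 := by rw [hBeq, Xc_zero]
  constructor
  · rw [hBX]
    exact U_le_Xc (fun i hi => (hMI i hi).2.1) 0
  · intro S hS
    rw [hBX] at hS ⊢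
    exact Xc_complemented hA hIlt hMI n 0 (by omega) S hS

/-- Every member of `Ω(U,L)` contains a `U`-prefrattini subalgebra w.r.t. the given series. -/
theorem omega_contains_pre (hA : IsChiefSeries A n) {S : LieSubalgebra F L}
    (hS : S ∈ Omega U) : ∃ B, IsPrefrattiniWrt U A n B ∧ B ≤ S := by
  set I : Set ℕ := {i | i < n ∧ ¬ IsUFrattiniFactor U (A i) (A (i + 1))} with hIdef
  obtain ⟨M, hM, hX⟩ := omega_contains_pre_core hA hIdef hS.1 hS.2 n 0 (by omega)
  refine ⟨⨅ i ∈ I, M i, ⟨M, fun i hilt hf => hM i ⟨hilt, hf⟩ (Nat.zero_le i), rfl⟩, ?_⟩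
  rw [← Xc_zero]
  have h0 : S ⊔ A 0 = S := by rw [hA.1, sup_bot_eq]
  exact hX.trans (le_of_eq h0)

/-- Any two `U`-prefrattini subalgebras w.r.t. the same series, one contained in the
other, coincide (they have equal dimension). -/
theorem pre_eq_of_le (hA : IsChiefSeries A n) {B B' : LieSubalgebra F L}
    (hB : IsPrefrattiniWrt U A n B) (hB' : IsPrefrattiniWrt U A n B') (hle : B' ≤ B) :
    B' = B := by
  obtain ⟨M, hM, hBeq⟩ := hB
  obtain ⟨M', hM', hBeq'⟩ := hB'
  set I : Set ℕ := {i | i < n ∧ ¬ IsUFrattiniFactor U (A i) (A (i + 1))} with hIdef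
  have hIlt : ∀ i ∈ I, i < n := fun i hi => hi.1
  have hMI : ∀ i ∈ I, IsCoatom (M i) ∧ U ⊔ A i ≤ M i ∧ ¬ A (i + 1) ≤ M i :=
    fun i hi => hM i hi.1 hi.2
  have hMI' : ∀ i ∈ I, IsCoatom (M' i) ∧ U ⊔ A i ≤ M' i ∧ ¬ A (i + 1) ≤ M' i :=
    fun i hi => hM' i hi.1 hi.2
  have hBX : B = Xc I M 0 := by rw [hBeq, Xc_zero]
  have hBX' : B' = Xc I M' 0 := by rw [hBeq', Xc_zero]
  have e1 := Xc_finrank hA hIlt hMI n 0 (by omega)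
  have e2 := Xc_finrank hA hIlt hMI' n 0 (by omega)
  rw [← hBX] at e1
  rw [← hBX'] at e2
  have hrank : Module.finrank F B'.toSubmodule = Module.finrank F B.toSubmodule := by omega
  have hsub : B'.toSubmodule ≤ B.toSubmodule :=
    (LieSubalgebra.toSubmodule_le_toSubmodule _ _).2 hle
  exact LieSubalgebra.toSubmodule_injective (Submodule.eq_of_le_of_finrank_eq hsub hrank)

end Assembly

end StmtAux

theorem stmt14 {F : Type*} [Field F] {L : Type*} [LieRing L] [LieAlgebra F L]
    [LieAlgebra.IsSolvable L] [FiniteDimensional F L]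
    (U : LieSubalgebra F L) (n : ℕ) (A : ℕ → LieSubalgebra F L)
    (hA : Paper.IsChiefSeries A n) :
    {B : LieSubalgebra F L | Paper.IsPrefrattiniWrt U A n B} = Paper.OmegaMin U := by
  ext S
  simp only [Set.mem_setOf_eq, Paper.OmegaMin]
  constructor
  · intro hB
    refine ⟨StmtAux.pre_mem_Omega hA hB, ?_⟩
    intro T hT hTle
    obtain ⟨B'', hpre, hle⟩ := StmtAux.omega_contains_pre hA hT
    have heq : B'' = S := StmtAux.pre_eq_of_le hA hB hpre (hle.trans hTle)
    exact le_antisymm hTle (heq ▸ hle)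
  · rintro ⟨hSO, hSmin⟩
    obtain ⟨B, hBpre, hBle⟩ := StmtAux.omega_contains_pre hA hSO
    have hBS : B = S := hSmin B (StmtAux.pre_mem_Omega hA hBpre) hBle
    exact hBS ▸ hBpre
end

section
/- For every solvable Lie algebra L and subalgebra U, φ(U,L) equals the intersection of all U-prefrattini subalgebras of L. -/
open LieAlgebra

namespace Paper

variable {F : Type*} [Field F] {L : Type*} [LieRing L] [LieAlgebra F L]

section AuxStmt16

open Module

variable {F : Type*} [Field F] {L : Type*} [LieRing L] [LieAlgebra F L]

lemma aux_bot_ideal : Paper.IsIdealSubalg (⊥ : LieSubalgebra F L) := by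
  intro x a ha
  simp only [LieSubalgebra.mem_bot] at ha ⊢
  simp [ha]

lemma aux_top_ideal : Paper.IsIdealSubalg (⊤ : LieSubalgebra F L) := fun _ _ _ => trivial

lemma aux_sub_le {P Q : LieSubalgebra F L} (h : P ≤ Q) : P.toSubmodule ≤ Q.toSubmodule :=
  fun _ hx => h hx

lemma aux_sub_lt {P Q : LieSubalgebra F L} (h : P < Q) : P.toSubmodule < Q.toSubmodule :=
  lt_of_le_of_ne (aux_sub_le h.le)
    (fun e => h.ne (LieSubalgebra.toSubmodule_injective e))

lemma aux_exists_min [FiniteDimensional F L] (P Q : LieSubalgebra F L)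
    (hQ : Paper.IsIdealSubalg Q) (hlt : P < Q) :
    ∃ R : LieSubalgebra F L, Paper.IsIdealSubalg R ∧ P < R ∧ R ≤ Q ∧
      ∀ B : LieSubalgebra F L, Paper.IsIdealSubalg B → P ≤ B → B ≤ R →
        B = P ∨ B = R := by
  classical
  have hex : ∃ d, ∃ R : LieSubalgebra F L, Paper.IsIdealSubalg R ∧ P < R ∧ R ≤ Q ∧
      finrank F R.toSubmodule = d := ⟨_, Q, hQ, hlt, le_rfl, rfl⟩
  obtain ⟨R, hRI, hPR, hRQ, hRd⟩ := Nat.find_spec hex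
  refine ⟨R, hRI, hPR, hRQ, ?_⟩
  intro B hBI hPB hBR
  rcases eq_or_lt_of_le hPB with h | h
  · exact Or.inl h.symm
  · right
    have hfind : Nat.find hex ≤ finrank F B.toSubmodule :=
      Nat.find_min' hex ⟨B, hBI, h, le_trans hBR hRQ, rfl⟩
    exact LieSubalgebra.toSubmodule_injective
      (Submodule.eq_of_le_of_finrank_le (aux_sub_le hBR) (by omega))

lemma aux_chain [FiniteDimensional F L] :
    ∀ (d : ℕ) (P Q : LieSubalgebra F L), Paper.IsIdealSubalg P → Paper.IsIdealSubalg Q →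
    P ≤ Q → finrank F Q.toSubmodule - finrank F P.toSubmodule ≤ d →
    ∃ (m : ℕ) (C : ℕ → LieSubalgebra F L), C 0 = P ∧ (∀ i, m ≤ i → C i = Q) ∧
      (∀ i, Paper.IsIdealSubalg (C i)) ∧
      ∀ i < m, C i < C (i + 1) ∧
        ∀ B : LieSubalgebra F L, Paper.IsIdealSubalg B → C i ≤ B → B ≤ C (i + 1) →
          B = C i ∨ B = C (i + 1) := by
  intro d
  induction d with
  | zero =>
    intro P Q hP hQ hle hd
    have hPQ : P = Q := LieSubalgebra.toSubmodule_injective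
      (Submodule.eq_of_le_of_finrank_le (aux_sub_le hle) (by omega))
    exact ⟨0, fun _ => P, rfl, fun i _ => hPQ, fun _ => hP, fun i hi => absurd hi (by omega)⟩
  | succ d ih =>
    intro P Q hP hQ hle hd
    rcases eq_or_lt_of_le hle with hPQ | hPQ
    · exact ⟨0, fun _ => P, rfl, fun i _ => hPQ, fun _ => hP, fun i hi => absurd hi (by omega)⟩
    · obtain ⟨R, hRI, hPR, hRQ, hRmin⟩ := aux_exists_min P Q hQ hPQ
      have hfr : finrank F P.toSubmodule < finrank F R.toSubmodule :=
        Submodule.finrank_lt_finrank_of_lt (aux_sub_lt hPR)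
      obtain ⟨m', C', hC0, hCtop, hCI, hCstep⟩ := ih R Q hRI hQ hRQ (by omega)
      refine ⟨m' + 1, fun i => if i = 0 then P else C' (i - 1), if_pos rfl, ?_, ?_, ?_⟩
      · intro i hi
        have hi0 : i ≠ 0 := by omega
        simp only [if_neg hi0]
        exact hCtop (i - 1) (by omega)
      · intro i
        by_cases h0 : i = 0
        · simp [h0, hP]
        · simp only [if_neg h0]; exact hCI _
      · intro i hi
        rcases Nat.eq_zero_or_pos i with h0 | h0
        · subst h0
          simp only [if_pos rfl, if_neg (Nat.one_ne_zero)]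
          simpa [hC0] using ⟨hPR, hRmin⟩
        · have h1 : i ≠ 0 := by omega
          have h2 : i + 1 ≠ 0 := by omega
          simp only [if_neg h1, if_neg h2]
          have : i - 1 < m' := by omega
          have := hCstep (i - 1) this
          have he : i - 1 + 1 = i + 1 - 1 := by omega
          rwa [he] at this

lemma aux_pref_le [FiniteDimensional F L] (U M : LieSubalgebra F L)
    (hM : IsCoatom M) (hUM : U ≤ M) :
    ∃ B : LieSubalgebra F L, Paper.IsPrefrattini U B ∧ B ≤ M := by
  classical
  set p : ℕ → Prop := fun dd => ∃ K : LieSubalgebra F L,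
    Paper.IsIdealSubalg K ∧ K ≤ M ∧ finrank F K.toSubmodule = dd with hp
  have h0 : p (finrank F (⊥ : LieSubalgebra F L).toSubmodule) := ⟨⊥, aux_bot_ideal, bot_le, rfl⟩
  obtain ⟨K, hKI, hKM, hKd⟩ := Nat.findGreatest_spec (Submodule.finrank_le _) h0
  have hKmax : ∀ K' : LieSubalgebra F L, Paper.IsIdealSubalg K' → K' ≤ M →
      finrank F K'.toSubmodule ≤ finrank F K.toSubmodule := by
    intro K' h1 h2
    rw [hKd]
    exact Nat.le_findGreatest (Submodule.finrank_le _) ⟨K', h1, h2, rfl⟩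
  have hKlt : K < ⊤ := lt_of_le_of_lt hKM hM.1.lt_top
  obtain ⟨A1, hA1I, hKA1, _, hA1min⟩ := aux_exists_min K ⊤ aux_top_ideal hKlt
  have hA1M : ¬ A1 ≤ M := by
    intro h
    have h1 := hKmax A1 hA1I h
    have h2 := Submodule.finrank_lt_finrank_of_lt (aux_sub_lt hKA1)
    omega
  obtain ⟨m1, C1, hC10, hC1top, hC1I, hC1step⟩ :=
    aux_chain (finrank F K.toSubmodule) ⊥ K aux_bot_ideal hKI bot_le (Nat.sub_le _ _)
  obtain ⟨m2, C2, hC20, hC2top, hC2I, hC2step⟩ :=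
    aux_chain (finrank F (⊤ : LieSubalgebra F L).toSubmodule) A1 ⊤ hA1I aux_top_ideal le_top
      (Nat.sub_le _ _)
  set n := m1 + 1 + m2 with hn
  set A : ℕ → LieSubalgebra F L := fun i => if i ≤ m1 then C1 i else C2 (i - (m1 + 1)) with hA
  have hAm1 : A m1 = K := by simp only [hA, if_pos le_rfl]; exact hC1top m1 le_rfl
  have hAm11 : A (m1 + 1) = A1 := by
    simp only [hA, if_neg (by omega : ¬ m1 + 1 ≤ m1)]
    simpa using hC20
  have hchief : Paper.IsChiefSeries A n := by
    refine ⟨?_, ?_, ?_, ?_⟩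
    · simp only [hA, if_pos (Nat.zero_le m1)]; exact hC10
    · simp only [hA, if_neg (by omega : ¬ n ≤ m1)]
      exact hC2top _ (by omega)
    · intro i
      by_cases h : i ≤ m1
      · simp only [hA, if_pos h]; exact hC1I _
      · simp only [hA, if_neg h]; exact hC2I _
    · intro i hi
      rcases lt_trichotomy i m1 with h | h | h
      · have e1 : A i = C1 i := by simp [hA, if_pos h.le]
        have e2 : A (i + 1) = C1 (i + 1) := by simp [hA, if_pos (by omega : i + 1 ≤ m1)]
        rw [e1, e2]
        exact hC1step i h
      · subst h
        rw [hAm1, hAm11]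
        exact ⟨hKA1, hA1min⟩
      · have e1 : A i = C2 (i - (m1 + 1)) := by simp [hA, if_neg (by omega : ¬ i ≤ m1)]
        have e2 : A (i + 1) = C2 (i - (m1 + 1) + 1) := by
          have : i + 1 - (m1 + 1) = i - (m1 + 1) + 1 := by omega
          simp [hA, if_neg (by omega : ¬ i + 1 ≤ m1), this]
        rw [e1, e2]
        exact hC2step _ (by omega)
  have hUKM : U ⊔ K ≤ M := sup_le hUM hKM
  have hphiM : Paper.phi (U ⊔ K) ≤ M := sInf_le ⟨hM, hUKM⟩
  have hnonfrat : ¬ Paper.IsUFrattiniFactor U (A m1) (A (m1 + 1)) := by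
    rw [hAm1, hAm11, Paper.IsUFrattiniFactor]
    push_neg
    exact ⟨fun h => hA1M (le_trans h hphiM), fun h => hM.1 (top_le_iff.mp (h ▸ hUKM))⟩
  have hchoice : ∀ i, ¬ Paper.IsUFrattiniFactor U (A i) (A (i + 1)) →
      ∃ M' : LieSubalgebra F L, IsCoatom M' ∧ U ⊔ A i ≤ M' ∧ ¬ A (i + 1) ≤ M' := by
    intro i hi
    rw [Paper.IsUFrattiniFactor] at hi
    push_neg at hi
    obtain ⟨h1, _⟩ := hi
    by_contra hcon
    push_neg at hcon
    apply h1
    apply le_sInf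
    rintro M' ⟨hc, hl⟩
    exact hcon M' hc hl
  set Mf : ℕ → LieSubalgebra F L := fun i =>
    if i = m1 then M
    else if h : ¬ Paper.IsUFrattiniFactor U (A i) (A (i + 1)) then (hchoice i h).choose
    else ⊤ with hMf
  refine ⟨⨅ i ∈ {i | i < n ∧ ¬ Paper.IsUFrattiniFactor U (A i) (A (i + 1))}, Mf i,
    ⟨n, A, hchief, Mf, ?_, rfl⟩, ?_⟩
  · intro i hi hfi
    by_cases h : i = m1
    · subst h
      simp only [hMf, if_pos rfl]
      rw [hAm1, hAm11]
      exact ⟨hM, hUKM, hA1M⟩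
    · simp only [hMf, if_neg h, dif_pos hfi]
      exact (hchoice i hfi).choose_spec
  · have hmem : m1 ∈ {i | i < n ∧ ¬ Paper.IsUFrattiniFactor U (A i) (A (i + 1))} :=
      ⟨by omega, hnonfrat⟩
    have hle : (⨅ i ∈ {i | i < n ∧ ¬ Paper.IsUFrattiniFactor U (A i) (A (i + 1))}, Mf i) ≤ Mf m1 :=
      iInf₂_le m1 hmem
    simpa only [hMf, if_pos rfl] using hle

end AuxStmt16

end Paper

theorem stmt16 {F : Type*} [Field F] {L : Type*} [LieRing L] [LieAlgebra F L]
    [LieAlgebra.IsSolvable L] [FiniteDimensional F L]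
    (U : LieSubalgebra F L) :
    Paper.phi U = sInf {B : LieSubalgebra F L | Paper.IsPrefrattini U B} := by
  apply le_antisymm
  · apply le_sInf
    rintro B ⟨n, A, hcs, Mf, hMf, rfl⟩
    refine le_iInf fun i => le_iInf fun hi => ?_
    obtain ⟨h1, h2⟩ := hi
    obtain ⟨hc, hle, _⟩ := hMf i h1 h2
    exact sInf_le ⟨hc, le_trans (le_trans le_sup_left hle) le_rfl⟩
  · apply le_sInf
    rintro M ⟨hc, hle⟩
    obtain ⟨B, hB, hBM⟩ := Paper.aux_pref_le U M hc hle
    exact le_trans (sInf_le hB) hBM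
end
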